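/- arXiv:2604.00828 — 6 statements merged into one kernel-verified Lean document; each statement's English description precedes it below -/
import Mathlib

section
/- Let G be a finite simple undirected graph with T ≥ 1 four-cycles and let δ ∈ (0, 1/2]. Then at most 328·δ²·T four-cycles of G contain two or more edges of heaviness at least √T/(4δ²). -/
variable {V : Type*}

/-- `IsC4 G a b c d` : the four distinct vertices `a, b, c, d` trace a
four-cycle of `G` (in this cyclic order). -/
def IsC4 (G : SimpleGraph V) (a b c d : V) : Prop :=
  G.Adj a b ∧ G.Adj b c ∧ G.Adj c d ∧ G.Adj d a ∧
    a ≠ b ∧ a ≠ c ∧ a ≠ d ∧ b ≠ c ∧ b ≠ d ∧ c ≠ d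

/-- The four-cycles of `G`, each counted once as a subgraph: we take the unique
canonical representative `(a, b, c, d)` tracing the cycle with `a` minimal and
`b < d`. -/
def fourCycles [LinearOrder V] (G : SimpleGraph V) : Set (V × V × V × V) :=
  {t | IsC4 G t.1 t.2.1 t.2.2.1 t.2.2.2 ∧
    t.1 < t.2.1 ∧ t.1 < t.2.2.1 ∧ t.1 < t.2.2.2 ∧ t.2.1 < t.2.2.2}

/-- The vertices of a four-cycle. -/
def cycleVerts (t : V × V × V × V) : Set V := {t.1, t.2.1, t.2.2.1, t.2.2.2}

/-- The edges of a four-cycle. -/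
def cycleEdges (t : V × V × V × V) : Set (Sym2 V) :=
  {s(t.1, t.2.1), s(t.2.1, t.2.2.1), s(t.2.2.1, t.2.2.2), s(t.2.2.2, t.1)}

/-- The wedges (paths with two edges) of a four-cycle, each represented as a
pair (center vertex, unordered pair of endpoints). -/
def cycleWedges (t : V × V × V × V) : Set (V × Sym2 V) :=
  {(t.2.1, s(t.1, t.2.2.1)), (t.2.2.1, s(t.2.1, t.2.2.2)),
    (t.2.2.2, s(t.2.2.1, t.1)), (t.1, s(t.2.2.2, t.2.1))}

/-- The two pairs of opposite vertices of a four-cycle. -/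
def cycleOppPairs (t : V × V × V × V) : Set (Sym2 V) :=
  {s(t.1, t.2.2.1), s(t.2.1, t.2.2.2)}

/-- The vertices of a wedge. -/
def wedgeVerts (w : V × Sym2 V) : Set V := insert w.1 {x | x ∈ w.2}

/-- The two edges of a wedge. -/
def wedgeEdges (w : V × Sym2 V) : Set (Sym2 V) := {e | ∃ x ∈ w.2, e = s(w.1, x)}

/-- The heaviness of a vertex: the number of four-cycles of `G` containing it. -/
noncomputable def vertexHeaviness [LinearOrder V] (G : SimpleGraph V) (v : V) : ℕ :=
  {A ∈ fourCycles G | v ∈ cycleVerts A}.ncard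

/-- The heaviness of an edge: the number of four-cycles of `G` containing it. -/
noncomputable def edgeHeaviness [LinearOrder V] (G : SimpleGraph V) (e : Sym2 V) : ℕ :=
  {A ∈ fourCycles G | e ∈ cycleEdges A}.ncard

/-- The heaviness of a wedge: the number of four-cycles of `G` containing it. -/
noncomputable def wedgeHeaviness [LinearOrder V] (G : SimpleGraph V) (w : V × Sym2 V) : ℕ :=
  {A ∈ fourCycles G | w ∈ cycleWedges A}.ncard

/-- The onion width of a pair of vertices: the number of their common neighbours. -/
noncomputable def onionWidth (G : SimpleGraph V) (u v : V) : ℕ :=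
  {w | G.Adj u w ∧ G.Adj v w}.ncard

/-- The onion size of a pair of vertices: the number of four-cycles in which the
two vertices are opposite. -/
noncomputable def onionSize (G : SimpleGraph V) (u v : V) : ℕ :=
  Nat.choose (onionWidth G u v) 2

section StmtZeroAux

open Finset

variable {V : Type*} [LinearOrder V]

private lemma sym2_eq_of_orient {a b x y : V} (hab : a ≠ b) (hor : a < b ↔ x < y)
    (h : s(a, b) = s(x, y)) : a = x ∧ b = y := by
  rw [Sym2.eq_iff] at h
  rcases h with ⟨rfl, rfl⟩ | ⟨rfl, rfl⟩
  · exact ⟨rfl, rfl⟩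
  · rcases hab.lt_or_gt with h | h
    · exact absurd (hor.mp h) (lt_asymm h)
    · exact absurd (hor.mpr h) (lt_asymm h)

/-- The canonical four-cycle tuple with opposite pairs `{a,c}` (where `a < c`)
and `{v,w}`. -/
def canonC4 (a c v w : V) : V × V × V × V :=
  if a < v ∧ a < w then (a, min v w, c, max v w) else (min v w, a, max v w, c)

lemma canonC4_retract₁ {a b c d : V} (h1 : a < b) (h3 : a < d) (h4 : b < d) :
    canonC4 a c b d = (a, b, c, d) := by
  rw [canonC4, if_pos ⟨h1, h3⟩, min_eq_left h4.le, max_eq_right h4.le]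

lemma canonC4_retract₂ {a b c d : V} (h1 : a < b) (h3 : a < d) (h4 : b < d) :
    canonC4 a c d b = (a, b, c, d) := by
  rw [canonC4, if_pos ⟨h3, h1⟩, min_eq_right h4.le, max_eq_left h4.le]

lemma canonC4_retract₃ {a b c d : V} (h1 : a < b) (h2 : a < c) :
    canonC4 b d c a = (a, b, c, d) := by
  rw [canonC4, if_neg, min_eq_right h2.le, max_eq_left h2.le]
  rintro ⟨-, hba⟩
  exact absurd hba h1.asymm

lemma canonC4_retract₄ {a b c d : V} (h1 : a < b) (h2 : a < c) :
    canonC4 b d a c = (a, b, c, d) := by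
  rw [canonC4, if_neg, min_eq_left h2.le, max_eq_right h2.le]
  rintro ⟨hba, -⟩
  exact absurd hba h1.asymm

lemma canonC4_mem {G : SimpleGraph V} {a c v w : V} (hac : a < c) (hav : G.Adj a v)
    (hcv : G.Adj c v) (haw : G.Adj a w) (hcw : G.Adj c w) (hvw : v ≠ w) :
    canonC4 a c v w ∈ fourCycles G := by
  rcases hvw.lt_or_gt with h | h
  · by_cases hcond : a < v ∧ a < w
    · rw [canonC4, if_pos hcond, min_eq_left h.le, max_eq_right h.le]
      exact ⟨⟨hav, hcv.symm, hcw, haw.symm, hav.ne, hac.ne, haw.ne, hcv.ne', h.ne, hcw.ne⟩,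
        hcond.1, hac, hcond.2, h⟩
    · have hva : v < a := by
        rcases not_and_or.mp hcond with h' | h'
        · exact lt_of_le_of_ne (not_lt.mp h') hav.ne'
        · exact h.trans (lt_of_le_of_ne (not_lt.mp h') haw.ne')
      rw [canonC4, if_neg hcond, min_eq_left h.le, max_eq_right h.le]
      exact ⟨⟨hav.symm, haw, hcw.symm, hcv, hav.ne', h.ne, hcv.ne', haw.ne, hac.ne,
        hcw.ne'⟩, hva, h, hva.trans hac, hac⟩
  · by_cases hcond : a < v ∧ a < w
    · rw [canonC4, if_pos hcond, min_eq_right h.le, max_eq_left h.le]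
      exact ⟨⟨haw, hcw.symm, hcv, hav.symm, haw.ne, hac.ne, hav.ne, hcw.ne', h.ne, hcv.ne⟩,
        hcond.2, hac, hcond.1, h⟩
    · have hwa : w < a := by
        rcases not_and_or.mp hcond with h' | h'
        · exact h.trans (lt_of_le_of_ne (not_lt.mp h') hav.ne')
        · exact lt_of_le_of_ne (not_lt.mp h') haw.ne'
      rw [canonC4, if_neg hcond, min_eq_right h.le, max_eq_left h.le]
      exact ⟨⟨haw.symm, hav, hcv.symm, hcw, haw.ne', h.ne, hcw.ne', hav.ne, hac.ne,
        hcv.ne'⟩, hwa, h, hwa.trans hac, hac⟩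

lemma cycleEdges_adj {G : SimpleGraph V} {A : V × V × V × V} (hA : A ∈ fourCycles G) {a b : V}
    (h : s(a, b) ∈ cycleEdges A) : G.Adj a b := by
  obtain ⟨⟨h12, h23, h34, h41, -⟩, -⟩ := hA
  have key : ∀ {x y : V}, G.Adj x y → s(a, b) = s(x, y) → G.Adj a b := by
    intro x y hxy he
    rw [Sym2.eq_iff] at he
    rcases he with ⟨rfl, rfl⟩ | ⟨rfl, rfl⟩
    · exact hxy
    · exact hxy.symm
  simp only [cycleEdges, Set.mem_insert_iff, Set.mem_singleton_iff] at h
  rcases h with h | h | h | h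
  · exact key h12 h
  · exact key h23 h
  · exact key h34 h
  · exact key h41 h


private lemma sigma_pair_ext {α β : Type*} {p q : α} {u v : β} (h1 : p = q) (h2 : u = v) :
    (⟨p, u⟩ : (_ : α) × β) = ⟨q, v⟩ := by subst h1; subst h2; rfl

end StmtZeroAux

open Finset in
set_option maxHeartbeats 2000000 in
/-- If `G` has `T ≥ 1` four-cycles and `δ ∈ (0, 1/2]`, then at most
`328·δ²·T` four-cycles of `G` contain two or more edges of heaviness at least
`√T/(4δ²)`. -/
theorem fourCycles_with_two_heavy_edges_le {V : Type*} [Fintype V] [LinearOrder V]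
    (G : SimpleGraph V) (T : ℕ) (hT : T = (fourCycles G).ncard) (hT1 : 1 ≤ T)
    (δ : ℝ) (hδ0 : 0 < δ) (hδ1 : δ ≤ 1 / 2) :
    ({A ∈ fourCycles G | ∃ e ∈ cycleEdges A, ∃ f ∈ cycleEdges A, e ≠ f ∧
        Real.sqrt T / (4 * δ ^ 2) ≤ (edgeHeaviness G e : ℝ) ∧
        Real.sqrt T / (4 * δ ^ 2) ≤ (edgeHeaviness G f : ℝ)}.ncard : ℝ)
      ≤ 328 * δ ^ 2 * T := by
  classical
  set θ : ℝ := Real.sqrt T / (4 * δ ^ 2) with hθdef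
  have hT0 : (0 : ℝ) < T := by exact_mod_cast hT1
  have hsT : 0 < Real.sqrt T := Real.sqrt_pos.mpr hT0
  have hTeq : Real.sqrt T * Real.sqrt T = (T : ℝ) := Real.mul_self_sqrt hT0.le
  have hδsq : (0 : ℝ) < δ ^ 2 := by positivity
  have hθpos : 0 < θ := by rw [hθdef]; positivity
  -- the finset of four-cycles
  set CF : Finset (V × V × V × V) := univ.filter (· ∈ fourCycles G) with hCFdef
  have hCF : ∀ A, A ∈ CF ↔ A ∈ fourCycles G := by intro A; simp [hCFdef]
  have hTC : T = CF.card := by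
    rw [hT]
    have : fourCycles G = ↑CF := by ext A; simp [hCF]
    rw [this, Set.ncard_coe_finset]
  -- heavy edges
  set HF : Finset (Sym2 V) := univ.filter (fun e => θ ≤ (edgeHeaviness G e : ℝ)) with hHFdef
  have hHF : ∀ e, e ∈ HF ↔ θ ≤ (edgeHeaviness G e : ℝ) := by intro e; simp [hHFdef]
  set m := HF.card with hmdef
  have hheav : ∀ e, edgeHeaviness G e = (CF.filter (fun A => e ∈ cycleEdges A)).card := by
    intro e
    rw [edgeHeaviness]
    have : {A ∈ fourCycles G | e ∈ cycleEdges A} =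
        ↑(CF.filter (fun A => e ∈ cycleEdges A)) := by
      ext A; simp [hCF, Set.mem_setOf_eq]
    rw [this, Set.ncard_coe_finset]
  have heavy_adj : ∀ a b : V, s(a, b) ∈ HF → G.Adj a b := by
    intro a b hab
    rw [hHF] at hab
    have hpos : 0 < edgeHeaviness G s(a, b) := by
      by_contra hc
      push_neg at hc
      rw [Nat.le_zero] at hc
      rw [hc] at hab
      norm_num at hab
      linarith
    rw [hheav, Finset.card_pos] at hpos
    obtain ⟨A, hA⟩ := hpos
    rw [Finset.mem_filter] at hA
    exact cycleEdges_adj ((hCF A).mp hA.1) hA.2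
  -- pairs, common neighbourhoods, heavy centers
  set PF : Finset (V × V) := univ.filter (fun p => p.1 < p.2) with hPFdef
  set cn : V × V → Finset V := fun p => univ.filter (fun b => G.Adj p.1 b ∧ G.Adj p.2 b)
    with hcndef
  set hcn : V × V → Finset V := fun p => univ.filter (fun b => s(p.1, b) ∈ HF ∧ s(p.2, b) ∈ HF)
    with hhcndef
  have hsubcn : ∀ p, hcn p ⊆ cn p := by
    intro p b hb
    rw [hhcndef, Finset.mem_filter] at hb
    rw [hcndef, Finset.mem_filter]
    exact ⟨Finset.mem_univ _, heavy_adj _ _ hb.2.1, heavy_adj _ _ hb.2.2⟩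
  -- sigma sets
  set ZH : Finset ((_ : V × V) × (_ : V) × V) :=
    PF.sigma (fun p => (hcn p).sigma (fun v => (cn p).erase v)) with hZHdef
  set ZF : Finset ((_ : V × V) × V × V) := PF.sigma (fun p => (cn p).offDiag) with hZFdef
  set Y2 : Finset ((_ : V × V) × V × V) := PF.sigma (fun p => (hcn p) ×ˢ (hcn p)) with hY2def
  have hZHcard : ZH.card = ∑ p ∈ PF, (hcn p).card * ((cn p).card - 1) := by
    rw [hZHdef, Finset.card_sigma]
    refine Finset.sum_congr rfl fun p _ => ?_
    rw [Finset.card_sigma]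
    rw [Finset.sum_congr rfl (fun v hv => Finset.card_erase_of_mem (hsubcn p hv))]
    rw [Finset.sum_const, smul_eq_mul]
  have hZFcard : ZF.card = ∑ p ∈ PF, ((cn p).card * (cn p).card - (cn p).card) := by
    rw [hZFdef, Finset.card_sigma]
    exact Finset.sum_congr rfl fun p _ => Finset.offDiag_card _
  have hY2card : Y2.card = ∑ p ∈ PF, (hcn p).card * (hcn p).card := by
    rw [hY2def, Finset.card_sigma]
    exact Finset.sum_congr rfl fun p _ => Finset.card_product _ _
  -- total heaviness of heavy edges is at most 4T
  have hquad : ∀ e1 e2 e3 e4 : Sym2 V, ({e1, e2, e3, e4} : Finset (Sym2 V)).card ≤ 4 := by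
    intro e1 e2 e3 e4
    refine (Finset.card_insert_le _ _).trans (Nat.succ_le_succ ?_)
    refine (Finset.card_insert_le _ _).trans (Nat.succ_le_succ ?_)
    refine (Finset.card_insert_le _ _).trans (Nat.succ_le_succ ?_)
    simp
  have hsum4 : ∑ e ∈ HF, edgeHeaviness G e ≤ 4 * CF.card := by
    calc ∑ e ∈ HF, edgeHeaviness G e
        = ∑ e ∈ HF, ∑ A ∈ CF, if e ∈ cycleEdges A then 1 else 0 := by
          refine Finset.sum_congr rfl fun e _ => ?_
          rw [hheav e, Finset.card_filter]
      _ = ∑ A ∈ CF, ∑ e ∈ HF, if e ∈ cycleEdges A then 1 else 0 := Finset.sum_comm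
      _ ≤ ∑ _A ∈ CF, 4 := by
          refine Finset.sum_le_sum fun A _ => ?_
          rw [← Finset.card_filter]
          refine le_trans (Finset.card_le_card (fun e he => ?_)) (hquad s(A.1, A.2.1)
            s(A.2.1, A.2.2.1) s(A.2.2.1, A.2.2.2) s(A.2.2.2, A.1))
          rw [Finset.mem_filter] at he
          have := he.2
          simp only [cycleEdges, Set.mem_insert_iff, Set.mem_singleton_iff] at this
          simp only [Finset.mem_insert, Finset.mem_singleton]
          exact this
      _ = 4 * CF.card := by rw [Finset.sum_const, smul_eq_mul, mul_comm]
  have hm : (m : ℝ) ≤ 16 * δ ^ 2 * Real.sqrt T := by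
    have h1 : (m : ℝ) * θ ≤ ∑ e ∈ HF, (edgeHeaviness G e : ℝ) := by
      rw [hmdef]
      calc (HF.card : ℝ) * θ = ∑ _e ∈ HF, θ := by rw [Finset.sum_const, nsmul_eq_mul]
        _ ≤ ∑ e ∈ HF, (edgeHeaviness G e : ℝ) := Finset.sum_le_sum fun e he => (hHF e).mp he
    have h2 : ∑ e ∈ HF, (edgeHeaviness G e : ℝ) ≤ 4 * T := by
      rw [← Nat.cast_sum]
      calc ((∑ e ∈ HF, edgeHeaviness G e : ℕ) : ℝ) ≤ ((4 * CF.card : ℕ) : ℝ) := by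
            exact_mod_cast hsum4
        _ = 4 * T := by rw [hTC]; push_cast; ring
    have h3 : (m : ℝ) * θ ≤ 4 * T := h1.trans h2
    rw [hθdef] at h3
    rw [← mul_le_mul_iff_of_pos_right hsT]
    calc (m : ℝ) * Real.sqrt T = (m : ℝ) * (Real.sqrt T / (4 * δ ^ 2)) * (4 * δ ^ 2) := by
          field_simp
      _ ≤ 4 * T * (4 * δ ^ 2) := by
          exact mul_le_mul_of_nonneg_right h3 (by positivity)
      _ = 16 * δ ^ 2 * Real.sqrt T * Real.sqrt T := by linear_combination (-16 * δ^2) * hTeq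
  -- bad cycles
  set Bad : Finset (V × V × V × V) := CF.filter (fun A => ∃ e ∈ cycleEdges A,
    ∃ f ∈ cycleEdges A, e ≠ f ∧ θ ≤ (edgeHeaviness G e : ℝ) ∧ θ ≤ (edgeHeaviness G f : ℝ))
    with hBaddef
  set BadOpp : Finset (V × V × V × V) := CF.filter (fun A =>
    (s(A.1, A.2.1) ∈ HF ∧ s(A.2.2.1, A.2.2.2) ∈ HF) ∨
    (s(A.2.1, A.2.2.1) ∈ HF ∧ s(A.2.2.2, A.1) ∈ HF)) with hBOdef
  set BadAdj : Finset (V × V × V × V) := CF.filter (fun A =>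
    (s(A.1, A.2.1) ∈ HF ∧ s(A.2.1, A.2.2.1) ∈ HF) ∨
    (s(A.2.1, A.2.2.1) ∈ HF ∧ s(A.2.2.1, A.2.2.2) ∈ HF) ∨
    (s(A.2.2.1, A.2.2.2) ∈ HF ∧ s(A.2.2.2, A.1) ∈ HF) ∨
    (s(A.2.2.2, A.1) ∈ HF ∧ s(A.1, A.2.1) ∈ HF)) with hBAdef
  have hsplit : Bad ⊆ BadOpp ∪ BadAdj := by
    intro A hA
    rw [hBaddef, Finset.mem_filter] at hA
    obtain ⟨hACF, e, he, f, hf, hef, hhe, hhf⟩ := hA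
    have he' : e ∈ HF := (hHF e).mpr hhe
    have hf' : f ∈ HF := (hHF f).mpr hhf
    simp only [cycleEdges, Set.mem_insert_iff, Set.mem_singleton_iff] at he hf
    simp only [Finset.mem_union, hBOdef, hBAdef, Finset.mem_filter]
    rcases he with rfl | rfl | rfl | rfl <;> rcases hf with rfl | rfl | rfl | rfl <;>
      first
        | exact absurd rfl hef
        | exact Or.inl ⟨hACF, Or.inl ⟨he', hf'⟩⟩
        | exact Or.inl ⟨hACF, Or.inl ⟨hf', he'⟩⟩
        | exact Or.inl ⟨hACF, Or.inr ⟨he', hf'⟩⟩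
        | exact Or.inl ⟨hACF, Or.inr ⟨hf', he'⟩⟩
        | exact Or.inr ⟨hACF, Or.inl ⟨he', hf'⟩⟩
        | exact Or.inr ⟨hACF, Or.inl ⟨hf', he'⟩⟩
        | exact Or.inr ⟨hACF, Or.inr (Or.inl ⟨he', hf'⟩)⟩
        | exact Or.inr ⟨hACF, Or.inr (Or.inl ⟨hf', he'⟩)⟩
        | exact Or.inr ⟨hACF, Or.inr (Or.inr (Or.inl ⟨he', hf'⟩))⟩
        | exact Or.inr ⟨hACF, Or.inr (Or.inr (Or.inl ⟨hf', he'⟩))⟩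
        | exact Or.inr ⟨hACF, Or.inr (Or.inr (Or.inr ⟨he', hf'⟩))⟩
        | exact Or.inr ⟨hACF, Or.inr (Or.inr (Or.inr ⟨hf', he'⟩))⟩
  have hext : ∀ A ∈ CF, (G.Adj A.1 A.2.1 ∧ G.Adj A.2.1 A.2.2.1 ∧ G.Adj A.2.2.1 A.2.2.2 ∧
      G.Adj A.2.2.2 A.1) ∧ (A.1 ≠ A.2.1 ∧ A.1 ≠ A.2.2.1 ∧ A.1 ≠ A.2.2.2 ∧ A.2.1 ≠ A.2.2.1 ∧
      A.2.1 ≠ A.2.2.2 ∧ A.2.2.1 ≠ A.2.2.2) ∧ (A.1 < A.2.1 ∧ A.1 < A.2.2.1 ∧ A.1 < A.2.2.2 ∧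
      A.2.1 < A.2.2.2) := by
    intro A hA
    obtain ⟨⟨h1, h2, h3, h4, n1, n2, n3, n4, n5, n6⟩, o1, o2, o3, o4⟩ := (hCF A).mp hA
    exact ⟨⟨h1, h2, h3, h4⟩, ⟨n1, n2, n3, n4, n5, n6⟩, o1, o2, o3, o4⟩
  have hBO : BadOpp.card ≤ 4 * (m * m) := by
    have hmt : ∀ A ∈ BadOpp, (if s(A.1, A.2.1) ∈ HF ∧ s(A.2.2.1, A.2.2.2) ∈ HF
        then (s(A.1, A.2.1), s(A.2.2.1, A.2.2.2)) else (s(A.2.2.2, A.1), s(A.2.1, A.2.2.1)))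
        ∈ HF ×ˢ HF := by
      intro A hA
      rw [hBOdef, Finset.mem_filter] at hA
      by_cases h : s(A.1, A.2.1) ∈ HF ∧ s(A.2.2.1, A.2.2.2) ∈ HF
      · rw [if_pos h]; exact Finset.mem_product.mpr h
      · rw [if_neg h]
        have h2 := hA.2.resolve_left h
        exact Finset.mem_product.mpr ⟨h2.2, h2.1⟩
    refine le_trans (Finset.card_le_mul_card_image_of_maps_to hmt 4 ?_) ?_
    swap
    · rw [Finset.card_product]
    intro b _
    refine le_trans (Finset.card_le_card_of_injOn (fun A =>
      ((decide (s(A.1, A.2.1) ∈ HF ∧ s(A.2.2.1, A.2.2.2) ∈ HF) : Bool),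
       (if s(A.1, A.2.1) ∈ HF ∧ s(A.2.2.1, A.2.2.2) ∈ HF then decide (A.2.2.1 < A.2.2.2)
        else decide (A.2.1 < A.2.2.1) : Bool)))
      (fun a _ => Finset.mem_univ ((_ : Bool × Bool))) ?_) (by simp)
    intro A hA B hB hbits
    simp only [Finset.coe_filter, Set.mem_setOf_eq] at hA hB
    obtain ⟨hABO, hfA⟩ := hA
    obtain ⟨hBBO, hfB⟩ := hB
    have hΦ := hfA.trans hfB.symm
    rw [hBOdef, Finset.mem_filter] at hABO hBBO
    obtain ⟨-, ⟨nA1, nA2, nA3, nA4, nA5, nA6⟩, oA1, oA2, oA3, oA4⟩ := hext A hABO.1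
    obtain ⟨-, ⟨nB1, nB2, nB3, nB4, nB5, nB6⟩, oB1, oB2, oB3, oB4⟩ := hext B hBBO.1
    rw [Prod.mk.injEq] at hbits
    have hb1 := decide_eq_decide.mp hbits.1
    obtain ⟨a1, a2, a3, a4⟩ := A
    obtain ⟨b1, b2, b3, b4⟩ := B
    dsimp only at *
    by_cases hcA : s(a1, a2) ∈ HF ∧ s(a3, a4) ∈ HF
    · have hcB := hb1.mp hcA
      rw [if_pos hcA, if_pos hcB] at hΦ
      have hb2 := hbits.2
      rw [if_pos hcA, if_pos hcB] at hb2
      rw [Prod.mk.injEq] at hΦ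
      have e1 := sym2_eq_of_orient oA1.ne (iff_of_true oA1 oB1) hΦ.1
      have e2 := sym2_eq_of_orient nA6 (decide_eq_decide.mp hb2) hΦ.2
      simp only [Prod.mk.injEq]
      exact ⟨e1.1, e1.2, e2.1, e2.2⟩
    · have hcB : ¬(s(b1, b2) ∈ HF ∧ s(b3, b4) ∈ HF) := fun h => hcA (hb1.mpr h)
      rw [if_neg hcA, if_neg hcB] at hΦ
      have hb2 := hbits.2
      rw [if_neg hcA, if_neg hcB] at hb2
      rw [Prod.mk.injEq] at hΦ
      have e1 := sym2_eq_of_orient oA3.ne' (iff_of_false oA3.asymm oB3.asymm) hΦ.1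
      have e2 := sym2_eq_of_orient nA4 (decide_eq_decide.mp hb2) hΦ.2
      simp only [Prod.mk.injEq]
      exact ⟨e1.2, e2.1, e2.2, e1.1⟩
  have hBA : BadAdj.card ≤ ZH.card := by
    set g : V × V × V × V → (_ : V × V) × (_ : V) × V := fun A =>
      if s(A.1, A.2.1) ∈ HF ∧ s(A.2.1, A.2.2.1) ∈ HF then ⟨(A.1, A.2.2.1), A.2.1, A.2.2.2⟩
      else if s(A.2.1, A.2.2.1) ∈ HF ∧ s(A.2.2.1, A.2.2.2) ∈ HF then
        ⟨(A.2.1, A.2.2.2), A.2.2.1, A.1⟩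
      else if s(A.2.2.1, A.2.2.2) ∈ HF ∧ s(A.2.2.2, A.1) ∈ HF then
        ⟨(A.1, A.2.2.1), A.2.2.2, A.2.1⟩
      else ⟨(A.2.1, A.2.2.2), A.1, A.2.2.1⟩ with hgdef
    have hret : ∀ A ∈ BadAdj, canonC4 (g A).1.1 (g A).1.2 (g A).2.1 (g A).2.2 = A := by
      intro A hA
      rw [hBAdef, Finset.mem_filter] at hA
      obtain ⟨-, -, o1, o2, o3, o4⟩ := hext A hA.1
      rw [hgdef]
      dsimp only
      split_ifs with h1 h2 h3
      · exact canonC4_retract₁ o1 o3 o4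
      · exact canonC4_retract₃ o1 o2
      · exact canonC4_retract₂ o1 o3 o4
      · exact canonC4_retract₄ o1 o2
    have hmaps : ∀ A ∈ BadAdj, g A ∈ ZH := by
      intro A hA
      rw [hBAdef, Finset.mem_filter] at hA
      obtain ⟨⟨h12, h23, h34, h41⟩, ⟨n1, n2, n3, n4, n5, n6⟩, o1, o2, o3, o4⟩ := hext A hA.1
      have hd := hA.2
      rw [hgdef, hZHdef]
      dsimp only
      split_ifs with h1 h2 h3
      · refine Finset.mem_sigma.mpr ⟨?_, Finset.mem_sigma.mpr ⟨?_, ?_⟩⟩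
        · rw [hPFdef]; simp only [Finset.mem_filter]; exact ⟨Finset.mem_univ _, o2⟩
        · rw [hhcndef]; simp only [Finset.mem_filter]
          exact ⟨Finset.mem_univ _, h1.1, by rw [Sym2.eq_swap]; exact h1.2⟩
        · rw [Finset.mem_erase, hcndef]; simp only [Finset.mem_filter]
          exact ⟨Ne.symm n5, Finset.mem_univ _, h41.symm, h34⟩
      · refine Finset.mem_sigma.mpr ⟨?_, Finset.mem_sigma.mpr ⟨?_, ?_⟩⟩
        · rw [hPFdef]; simp only [Finset.mem_filter]; exact ⟨Finset.mem_univ _, o4⟩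
        · rw [hhcndef]; simp only [Finset.mem_filter]
          exact ⟨Finset.mem_univ _, h2.1, by rw [Sym2.eq_swap]; exact h2.2⟩
        · rw [Finset.mem_erase, hcndef]; simp only [Finset.mem_filter]
          exact ⟨n2, Finset.mem_univ _, h12.symm, h41⟩
      · refine Finset.mem_sigma.mpr ⟨?_, Finset.mem_sigma.mpr ⟨?_, ?_⟩⟩
        · rw [hPFdef]; simp only [Finset.mem_filter]; exact ⟨Finset.mem_univ _, o2⟩
        · rw [hhcndef]; simp only [Finset.mem_filter]
          exact ⟨Finset.mem_univ _, by rw [Sym2.eq_swap]; exact h3.2, h3.1⟩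
        · rw [Finset.mem_erase, hcndef]; simp only [Finset.mem_filter]
          exact ⟨n5, Finset.mem_univ _, h12, h23.symm⟩
      · have h4 := ((hd.resolve_left h1).resolve_left h2).resolve_left h3
        refine Finset.mem_sigma.mpr ⟨?_, Finset.mem_sigma.mpr ⟨?_, ?_⟩⟩
        · rw [hPFdef]; simp only [Finset.mem_filter]; exact ⟨Finset.mem_univ _, o4⟩
        · rw [hhcndef]; simp only [Finset.mem_filter]
          exact ⟨Finset.mem_univ _, by rw [Sym2.eq_swap]; exact h4.2, h4.1⟩
        · rw [Finset.mem_erase, hcndef]; simp only [Finset.mem_filter]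
          exact ⟨Ne.symm n2, Finset.mem_univ _, h23, h34.symm⟩
    refine Finset.card_le_card_of_injOn g hmaps ?_
    intro A hA B hB hgAB
    rw [Finset.mem_coe] at hA hB
    rw [← hret A hA, ← hret B hB, hgAB]
  have hZF4 : ZF.card ≤ 4 * CF.card := by
    have hmt : ∀ z ∈ ZF, canonC4 z.1.1 z.1.2 z.2.1 z.2.2 ∈ CF := by
      intro z hz
      rw [hZFdef, Finset.mem_sigma] at hz
      obtain ⟨hp, hq⟩ := hz
      rw [Finset.mem_offDiag] at hq
      obtain ⟨hv, hw, hvw⟩ := hq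
      rw [hcndef] at hv hw
      simp only [Finset.mem_filter] at hv hw
      rw [hPFdef] at hp
      simp only [Finset.mem_filter] at hp
      rw [hCF]
      exact canonC4_mem hp.2 hv.2.1 hv.2.2 hw.2.1 hw.2.2 hvw
    refine le_trans (Finset.card_le_mul_card_image_of_maps_to hmt 4 ?_) le_rfl
    intro b _
    refine le_trans (Finset.card_le_card_of_injOn (fun z =>
      ((decide (z.1.1 < z.2.1 ∧ z.1.1 < z.2.2) : Bool), (decide (z.2.1 < z.2.2) : Bool)))
      (fun a _ => Finset.mem_univ ((_ : Bool × Bool))) ?_) (by simp)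
    intro z hz w hw hbits
    simp only [Finset.coe_filter, Set.mem_setOf_eq] at hz hw
    obtain ⟨hzZ, hzc⟩ := hz
    obtain ⟨hwZ, hwc⟩ := hw
    rw [hZFdef, Finset.mem_sigma] at hzZ hwZ
    have hzne : z.2.1 ≠ z.2.2 := (Finset.mem_offDiag.mp hzZ.2).2.2
    have hwne : w.2.1 ≠ w.2.2 := (Finset.mem_offDiag.mp hwZ.2).2.2
    have hc : canonC4 z.1.1 z.1.2 z.2.1 z.2.2 = canonC4 w.1.1 w.1.2 w.2.1 w.2.2 :=
      hzc.trans hwc.symm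
    rw [Prod.mk.injEq] at hbits
    have hb1 := decide_eq_decide.mp hbits.1
    have hb2 := decide_eq_decide.mp hbits.2
    obtain ⟨⟨za, zc⟩, zv, zw⟩ := z
    obtain ⟨⟨wa, wc⟩, wv, ww⟩ := w
    dsimp only at *
    simp only [canonC4] at hc
    by_cases hcz : za < zv ∧ za < zw
    · have hcw : wa < wv ∧ wa < ww := hb1.mp hcz
      rw [if_pos hcz, if_pos hcw] at hc
      simp only [Prod.mk.injEq] at hc
      obtain ⟨e1, e2, e3, e4⟩ := hc
      by_cases hvw : zv < zw
      · have hvw' : wv < ww := hb2.mp hvw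
        rw [min_eq_left hvw.le, min_eq_left hvw'.le] at e2
        rw [max_eq_right hvw.le, max_eq_right hvw'.le] at e4
        exact sigma_pair_ext (by rw [e1, e3]) (by rw [e2, e4])
      · have hzw : zw < zv := hzne.lt_or_gt.resolve_left hvw
        have hww : ww < wv := hwne.lt_or_gt.resolve_left (fun h => hvw (hb2.mpr h))
        rw [min_eq_right hzw.le, min_eq_right hww.le] at e2
        rw [max_eq_left hzw.le, max_eq_left hww.le] at e4
        exact sigma_pair_ext (by rw [e1, e3]) (by rw [e4, e2])
    · have hcw : ¬(wa < wv ∧ wa < ww) := fun h => hcz (hb1.mpr h)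
      rw [if_neg hcz, if_neg hcw] at hc
      simp only [Prod.mk.injEq] at hc
      obtain ⟨e1, e2, e3, e4⟩ := hc
      by_cases hvw : zv < zw
      · have hvw' : wv < ww := hb2.mp hvw
        rw [min_eq_left hvw.le, min_eq_left hvw'.le] at e1
        rw [max_eq_right hvw.le, max_eq_right hvw'.le] at e3
        exact sigma_pair_ext (by rw [e2, e4]) (by rw [e1, e3])
      · have hzw : zw < zv := hzne.lt_or_gt.resolve_left hvw
        have hww : ww < wv := hwne.lt_or_gt.resolve_left (fun h => hvw (hb2.mpr h))
        rw [min_eq_right hzw.le, min_eq_right hww.le] at e1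
        rw [max_eq_left hzw.le, max_eq_left hww.le] at e3
        exact sigma_pair_ext (by rw [e2, e4]) (by rw [e3, e1])
  have hY24 : Y2.card ≤ 4 * (m * m) := by
    have hmt : ∀ q ∈ Y2, (s(q.1.1, q.2.1), s(q.1.2, q.2.2)) ∈ HF ×ˢ HF := by
      intro q hq
      rw [hY2def, Finset.mem_sigma, Finset.mem_product] at hq
      obtain ⟨-, hv, hw⟩ := hq
      rw [hhcndef] at hv hw
      simp only [Finset.mem_filter] at hv hw
      exact Finset.mem_product.mpr ⟨hv.2.1, hw.2.2⟩
    refine le_trans (Finset.card_le_mul_card_image_of_maps_to hmt 4 ?_) ?_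
    swap
    · rw [Finset.card_product]
    intro b _
    refine le_trans (Finset.card_le_card_of_injOn (fun q =>
      ((decide (q.1.1 < q.2.1) : Bool), (decide (q.1.2 < q.2.2) : Bool)))
      (fun a _ => Finset.mem_univ ((_ : Bool × Bool))) ?_) (by simp)
    intro z hz w hw hbits
    simp only [Finset.coe_filter, Set.mem_setOf_eq] at hz hw
    obtain ⟨hzY, hzc⟩ := hz
    obtain ⟨hwY, hwc⟩ := hw
    have hc := hzc.trans hwc.symm
    -- non-degeneracy
    rw [hY2def, Finset.mem_sigma, Finset.mem_product] at hzY hwY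
    obtain ⟨-, hzv, hzw⟩ := hzY
    obtain ⟨-, hwv, hww⟩ := hwY
    rw [hhcndef] at hzv hzw hwv hww
    simp only [Finset.mem_filter] at hzv hzw hwv hww
    have nz1 : z.1.1 ≠ z.2.1 := (heavy_adj _ _ hzv.2.1).ne
    have nz2 : z.1.2 ≠ z.2.2 := (heavy_adj _ _ hzw.2.2).ne
    rw [Prod.mk.injEq] at hbits hc
    have hb1 := decide_eq_decide.mp hbits.1
    have hb2 := decide_eq_decide.mp hbits.2
    obtain ⟨⟨za, zc⟩, zv, zw⟩ := z
    obtain ⟨⟨wa, wc⟩, wv, ww⟩ := w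
    dsimp only at *
    have e1 := sym2_eq_of_orient nz1 hb1 hc.1
    have e2 := sym2_eq_of_orient nz2 hb2 hc.2
    exact sigma_pair_ext (by rw [e1.1, e2.1]) (by rw [e1.2, e2.2])
  -- Cauchy–Schwarz
  have eZH : (ZH.card : ℝ) = ∑ p ∈ PF, ((hcn p).card : ℝ) * (((cn p).card - 1 : ℕ) : ℝ) := by
    rw [hZHcard]
    simp only [Nat.cast_sum, Nat.cast_mul]
  have hCS := Finset.sum_mul_sq_le_sq_mul_sq PF (fun p => ((hcn p).card : ℝ))
    (fun p => (((cn p).card - 1 : ℕ) : ℝ))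
  have eY : ∑ p ∈ PF, ((hcn p).card : ℝ) ^ 2 = (Y2.card : ℝ) := by
    rw [hY2card]
    simp only [Nat.cast_sum, Nat.cast_mul]
    exact Finset.sum_congr rfl fun p _ => by ring
  have eZ : ∑ p ∈ PF, (((cn p).card - 1 : ℕ) : ℝ) ^ 2 ≤ (ZF.card : ℝ) := by
    rw [hZFcard, Nat.cast_sum]
    refine Finset.sum_le_sum fun p _ => ?_
    have hk : ((cn p).card - 1) * ((cn p).card - 1) ≤ (cn p).card * (cn p).card - (cn p).card := by
      rcases (cn p).card with _ | n
      · simp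
      · simp only [Nat.succ_sub_one]
        have hexp : (n + 1) * (n + 1) = n * n + n + (n + 1) := by ring
        rw [hexp, Nat.add_sub_cancel]
        exact Nat.le_add_right _ _
    calc (((cn p).card - 1 : ℕ) : ℝ) ^ 2
        = ((((cn p).card - 1) * ((cn p).card - 1) : ℕ) : ℝ) := by push_cast; ring
      _ ≤ (((cn p).card * (cn p).card - (cn p).card : ℕ) : ℝ) := Nat.cast_le.mpr hk
  have hZFR : (ZF.card : ℝ) ≤ 4 * T := by
    calc (ZF.card : ℝ) ≤ ((4 * CF.card : ℕ) : ℝ) := Nat.cast_le.mpr hZF4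
      _ = 4 * T := by rw [hTC]; push_cast; ring
  have hY2R : (Y2.card : ℝ) ≤ 4 * ((m : ℝ) * m) := by exact_mod_cast hY24
  have hZHsq : (ZH.card : ℝ) ^ 2 ≤ 4 * ((m : ℝ) * m) * (4 * T) := by
    calc (ZH.card : ℝ) ^ 2
        = (∑ p ∈ PF, ((hcn p).card : ℝ) * (((cn p).card - 1 : ℕ) : ℝ)) ^ 2 := by rw [eZH]
      _ ≤ (∑ p ∈ PF, ((hcn p).card : ℝ) ^ 2) *
          (∑ p ∈ PF, (((cn p).card - 1 : ℕ) : ℝ) ^ 2) := hCS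
      _ ≤ 4 * ((m : ℝ) * m) * (4 * T) := by
          refine mul_le_mul ?_ (eZ.trans hZFR) ?_ ?_
          · rw [eY]; exact hY2R
          · exact Finset.sum_nonneg fun p _ => sq_nonneg _
          · exact mul_nonneg (by norm_num) (mul_nonneg (Nat.cast_nonneg m) (Nat.cast_nonneg m))
  have hZHle : (ZH.card : ℝ) ≤ 4 * m * Real.sqrt T := by
    have h0 : (0 : ℝ) ≤ 4 * m * Real.sqrt T := by positivity
    have hsq : (4 * (m : ℝ) * Real.sqrt T) ^ 2 = 4 * ((m : ℝ) * m) * (4 * T) := by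
      linear_combination (16 * (m : ℝ) * m) * hTeq
    have h2 := Real.sqrt_le_sqrt (hZHsq.trans_eq hsq.symm)
    rwa [Real.sqrt_sq (by positivity), Real.sqrt_sq h0] at h2
  -- assembling
  have hBadR : (Bad.card : ℝ) ≤ 4 * ((m : ℝ) * m) + 4 * m * Real.sqrt T := by
    have h1 : Bad.card ≤ BadOpp.card + BadAdj.card :=
      (Finset.card_le_card hsplit).trans (Finset.card_union_le _ _)
    have h1' : (Bad.card : ℝ) ≤ (BadOpp.card : ℝ) + (BadAdj.card : ℝ) := by exact_mod_cast h1
    have h2 : (BadOpp.card : ℝ) ≤ 4 * ((m : ℝ) * m) := by exact_mod_cast hBO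
    have h3 : (BadAdj.card : ℝ) ≤ (ZH.card : ℝ) := Nat.cast_le.mpr hBA
    linarith [hZHle]
  have hLHS : {A ∈ fourCycles G | ∃ e ∈ cycleEdges A, ∃ f ∈ cycleEdges A, e ≠ f ∧
      θ ≤ (edgeHeaviness G e : ℝ) ∧ θ ≤ (edgeHeaviness G f : ℝ)} = ↑Bad := by
    rw [hBaddef]
    ext A
    simp only [Set.mem_setOf_eq, Finset.coe_filter, Finset.mem_coe, Finset.mem_filter, hCF]
  rw [hLHS, Set.ncard_coe_finset]
  -- numerics
  have hδ4 : δ ^ 2 ≤ 1 / 4 := by nlinarith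
  have hm0 : (0 : ℝ) ≤ m := Nat.cast_nonneg m
  have hmm : (m : ℝ) * m ≤ 256 * (δ ^ 2 * δ ^ 2) * T := by
    have h := mul_le_mul hm hm hm0 (by positivity)
    calc (m : ℝ) * m ≤ 16 * δ ^ 2 * Real.sqrt T * (16 * δ ^ 2 * Real.sqrt T) := h
      _ = 256 * (δ ^ 2 * δ ^ 2) * T := by linear_combination (256 * δ ^ 2 * δ ^ 2) * hTeq
  have hms : (m : ℝ) * Real.sqrt T ≤ 16 * δ ^ 2 * T := by
    have h := mul_le_mul_of_nonneg_right hm hsT.le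
    calc (m : ℝ) * Real.sqrt T ≤ 16 * δ ^ 2 * Real.sqrt T * Real.sqrt T := h
      _ = 16 * δ ^ 2 * T := by linear_combination (16 * δ ^ 2) * hTeq
  have hd4T : δ ^ 2 * (δ ^ 2 * T) ≤ (1 / 4) * (δ ^ 2 * T) :=
    mul_le_mul_of_nonneg_right hδ4 (by positivity)
  nlinarith [hBadR, hmm, hms, hd4T, mul_nonneg hδsq.le hT0.le]
end

section
/- Let G be a finite simple undirected graph with T four-cycles and let δ ∈ (0, 1/2]. Then the sum, over all unordered pairs {u,v} of distinct vertices with ow(u,v) > 1/δ, of ow(u,v) is at most 8δT. -/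
variable {V : Type*}

open Finset in
/-- Number of increasing pairs from a finset equals `choose 2`. -/
lemma card_lt_pairs {α : Type*} [LinearOrder α] [DecidableEq α] (s : Finset α) :
    ((s ×ˢ s).filter fun q => q.1 < q.2).card = s.card.choose 2 := by
  rw [← Finset.card_powersetCard 2 s]
  apply Finset.card_bij (fun q _ => ({q.1, q.2} : Finset α))
  · rintro ⟨a, b⟩ hq
    simp only [mem_filter, mem_product] at hq
    obtain ⟨⟨ha, hb⟩, hab⟩ := hq
    rw [Finset.mem_powersetCard]
    refine ⟨by intro x hx; simp at hx; rcases hx with rfl | rfl <;> assumption, ?_⟩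
    rw [Finset.card_insert_of_notMem (by simp [hab.ne]), Finset.card_singleton]
  · rintro ⟨a, b⟩ hq ⟨c, d⟩ hq' h
    simp only [mem_filter, mem_product] at hq hq'
    have hab := hq.2
    have hcd := hq'.2
    have ha : a ∈ ({c, d} : Finset α) := by rw [← h]; simp
    have hb : b ∈ ({c, d} : Finset α) := by rw [← h]; simp
    have hc : c ∈ ({a, b} : Finset α) := by rw [h]; simp
    have hd : d ∈ ({a, b} : Finset α) := by rw [h]; simp
    simp only [Finset.mem_insert, Finset.mem_singleton] at ha hb hc hd
    have : a = c ∧ b = d := by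
      rcases ha with rfl | rfl
      · rcases hb with rfl | rfl
        · exact absurd hab (lt_irrefl _)
        · exact ⟨rfl, rfl⟩
      · rcases hb with rfl | rfl
        · exact absurd (hab.trans hcd) (lt_irrefl _)
        · exact absurd hab (lt_irrefl _)
    simp [this.1, this.2]
  · intro t ht
    rw [Finset.mem_powersetCard] at ht
    obtain ⟨a, b, hab, rfl⟩ := Finset.card_eq_two.mp ht.2
    rcases hab.lt_or_gt with h | h
    · exact ⟨(a, b), by
        simp only [mem_filter, mem_product]
        exact ⟨⟨ht.1 (by simp), ht.1 (by simp)⟩, h⟩, rfl⟩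
    · exact ⟨(b, a), by
        simp only [mem_filter, mem_product]
        exact ⟨⟨ht.1 (by simp), ht.1 (by simp)⟩, h⟩, by
          simp [Finset.pair_comm]⟩

lemma onionSize_le [Fintype V] [LinearOrder V] (G : SimpleGraph V) {u v : V}
    (huv : u < v) :
    onionSize G u v ≤ {A ∈ fourCycles G | s(u, v) ∈ cycleOppPairs A}.ncard := by
  classical
  set N : Set V := {w | G.Adj u w ∧ G.Adj v w} with hN
  have hNfin : N.Finite := Set.toFinite _
  set s : Finset V := hNfin.toFinset with hs
  have hkw : onionWidth G u v = s.card := by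
    rw [onionWidth, ← hN, Set.ncard_eq_toFinset_card']
    congr 1
    ext x; simp [hs, hN]
  set Tset : Set (V × V × V × V) := {A ∈ fourCycles G | s(u, v) ∈ cycleOppPairs A}
  have hTfin : Tset.Finite := Set.toFinite _
  rw [onionSize, hkw, ← card_lt_pairs s, ← Set.ncard_coe_finset ((s ×ˢ s).filter fun q => q.1 < q.2)]
  apply Set.ncard_le_ncard_of_injOn
    (fun q => if u < q.1 then (u, q.1, v, q.2) else (q.1, u, q.2, v))
  · -- maps to
    rintro ⟨w, x⟩ hq
    simp only [Finset.coe_filter, Finset.mem_product, Set.mem_setOf_eq] at hq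
    obtain ⟨⟨hw, hx⟩, hwx⟩ := hq
    rw [hs, Set.Finite.mem_toFinset] at hw hx
    obtain ⟨huw, hvw⟩ := hw
    obtain ⟨hux, hvx⟩ := hx
    by_cases h : u < w
    · simp only [if_pos h]
      refine ⟨⟨⟨huw, hvw.symm, hvx, hux.symm, huw.ne, huv.ne, hux.ne, hvw.ne', hwx.ne, hvx.ne⟩,
        h, huv, h.trans hwx, hwx⟩, ?_⟩
      left; rfl
    · have hwu : w < u := lt_of_le_of_ne (le_of_not_gt h) huw.ne'
      simp only [if_neg h]
      refine ⟨⟨⟨huw.symm, hux, hvx.symm, hvw, huw.ne', hwx.ne, hvw.ne', hux.ne, huv.ne, hvx.ne'⟩,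
        hwu, hwx, hwu.trans huv, huv⟩, ?_⟩
      right; rfl
  · -- injOn
    rintro ⟨w, x⟩ hq ⟨w', x'⟩ hq' heq
    simp only [Finset.coe_filter, Finset.mem_product, Set.mem_setOf_eq] at hq hq'
    have hw := hq.1.1; have hw' := hq'.1.1
    rw [hs, Set.Finite.mem_toFinset] at hw hw'
    have hwu : w ≠ u := hw.1.ne'
    have hw'u : w' ≠ u := hw'.1.ne'
    by_cases h : u < w <;> by_cases h' : u < w'
    · simp only [if_pos h, if_pos h', Prod.mk.injEq] at heq
      exact Prod.ext heq.2.1 heq.2.2.2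
    · simp only [if_pos h, if_neg h', Prod.mk.injEq] at heq
      exact absurd heq.1.symm hw'u
    · simp only [if_neg h, if_pos h', Prod.mk.injEq] at heq
      exact absurd heq.1 hwu
    · simp only [if_neg h, if_neg h', Prod.mk.injEq] at heq
      exact Prod.ext heq.1 heq.2.2.1

lemma sum_opp_le [Fintype V] [LinearOrder V] (G : SimpleGraph V) :
    ∑ p ∈ Finset.univ.filter (fun p : V × V => p.1 < p.2),
        {A ∈ fourCycles G | s(p.1, p.2) ∈ cycleOppPairs A}.ncard
      ≤ 2 * (fourCycles G).ncard := by
  classical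
  set 𝒜 : Finset (V × V × V × V) := Finset.univ.filter (· ∈ fourCycles G) with h𝒜
  have hT : (fourCycles G).ncard = 𝒜.card := by
    rw [Set.ncard_eq_toFinset_card']; congr 1; ext A; simp [h𝒜]
  have hstep : ∀ p : V × V,
      {A ∈ fourCycles G | s(p.1, p.2) ∈ cycleOppPairs A}.ncard
        = (𝒜.filter (fun A => s(p.1, p.2) ∈ cycleOppPairs A)).card := by
    intro p
    rw [Set.ncard_eq_toFinset_card']; congr 1; ext A; simp [h𝒜, and_comm]
  calc ∑ p ∈ Finset.univ.filter (fun p : V × V => p.1 < p.2),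
        {A ∈ fourCycles G | s(p.1, p.2) ∈ cycleOppPairs A}.ncard
      = ∑ p ∈ Finset.univ.filter (fun p : V × V => p.1 < p.2),
          ∑ A ∈ 𝒜, if s(p.1, p.2) ∈ cycleOppPairs A then 1 else 0 := by
        refine Finset.sum_congr rfl fun p _ => ?_
        rw [hstep p, Finset.card_filter]
    _ = ∑ A ∈ 𝒜, ∑ p ∈ Finset.univ.filter (fun p : V × V => p.1 < p.2),
          if s(p.1, p.2) ∈ cycleOppPairs A then 1 else 0 := Finset.sum_comm
    _ ≤ ∑ _A ∈ 𝒜, 2 := by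
        refine Finset.sum_le_sum fun A hA => ?_
        rw [← Finset.card_filter, Finset.filter_filter]
        have hA' : A ∈ fourCycles G := by
          rw [h𝒜, Finset.mem_filter] at hA; exact hA.2
        obtain ⟨-, -, hac, -, hbd⟩ := hA'
        have hsub : (Finset.univ.filter
            (fun p : V × V => p.1 < p.2 ∧ s(p.1, p.2) ∈ cycleOppPairs A))
            ⊆ {(A.1, A.2.2.1), (A.2.1, A.2.2.2)} := by
          rintro ⟨x, y⟩ hp
          simp only [Finset.mem_filter, Finset.mem_univ, true_and] at hp
          obtain ⟨hxy, hmem⟩ := hp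
          rcases hmem with h | h
          · rcases Sym2.eq_iff.mp h with ⟨rfl, rfl⟩ | ⟨rfl, rfl⟩
            · simp
            · exact absurd (hxy.trans hac) (lt_irrefl _)
          · rcases Sym2.eq_iff.mp h with ⟨rfl, rfl⟩ | ⟨rfl, rfl⟩
            · simp
            · exact absurd (hxy.trans hbd) (lt_irrefl _)
        calc _ ≤ ({(A.1, A.2.2.1), (A.2.1, A.2.2.2)} : Finset (V × V)).card :=
              Finset.card_le_card hsub
          _ ≤ 2 := Finset.card_insert_le _ _ |>.trans (by simp)
    _ = 2 * 𝒜.card := by rw [Finset.sum_const, smul_eq_mul, mul_comm]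
    _ = 2 * (fourCycles G).ncard := by rw [hT]

/-- For `δ ∈ (0, 1/2]`, the sum, over all unordered pairs `{u,v}` of
distinct vertices with `ow(u,v) > 1/δ`, of `ow(u,v)` is at most `8δT`, where `T` is
the number of four-cycles of `G`. -/
theorem sum_large_onionWidth_le {V : Type*} [Fintype V] [LinearOrder V]
    (G : SimpleGraph V) (T : ℕ) (hT : T = (fourCycles G).ncard)
    (δ : ℝ) (hδ0 : 0 < δ) (hδ1 : δ ≤ 1 / 2) :
    ∑ᶠ p ∈ {p : V × V | p.1 < p.2 ∧ 1 / δ < (onionWidth G p.1 p.2 : ℝ)},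
        (onionWidth G p.1 p.2 : ℝ)
      ≤ 8 * δ * T := by
  classical
  have hfin : {p : V × V | p.1 < p.2 ∧ 1 / δ < (onionWidth G p.1 p.2 : ℝ)}.Finite :=
    Set.toFinite _
  rw [← hfin.coe_toFinset, finsum_mem_coe_finset]
  set Sf := hfin.toFinset with hSf
  set pairs : Finset (V × V) := Finset.univ.filter (fun p : V × V => p.1 < p.2) with hpairs
  have hsub : Sf ⊆ pairs := by
    intro p hp
    rw [hSf, Set.Finite.mem_toFinset] at hp
    simp [hpairs, hp.1]
  have key1 : ∀ p ∈ Sf,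
      (onionWidth G p.1 p.2 : ℝ) ≤ 4 * δ * (onionSize G p.1 p.2 : ℝ) := by
    intro p hp
    rw [hSf, Set.Finite.mem_toFinset] at hp
    obtain ⟨-, hk⟩ := hp
    set n : ℝ := (onionWidth G p.1 p.2 : ℝ) with hn
    have h1 : 1 < n * δ := (div_lt_iff₀ hδ0).mp hk
    have hn0 : (0 : ℝ) ≤ n := Nat.cast_nonneg _
    have h2 : 2 < n := by nlinarith
    rw [onionSize, Nat.cast_choose_two, ← hn]
    nlinarith [mul_lt_mul_of_pos_right h1 (by linarith : (0 : ℝ) < n - 1)]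
  have key2 : ∑ p ∈ pairs, (onionSize G p.1 p.2 : ℕ) ≤ 2 * T := by
    rw [hT]
    refine le_trans (Finset.sum_le_sum fun p hp => ?_) (sum_opp_le G)
    have : p.1 < p.2 := by
      rw [hpairs, Finset.mem_filter] at hp; exact hp.2
    exact onionSize_le G this
  calc ∑ p ∈ Sf, (onionWidth G p.1 p.2 : ℝ)
      ≤ ∑ p ∈ Sf, 4 * δ * (onionSize G p.1 p.2 : ℝ) := Finset.sum_le_sum key1
    _ = 4 * δ * ∑ p ∈ Sf, (onionSize G p.1 p.2 : ℝ) := by rw [Finset.mul_sum]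
    _ ≤ 4 * δ * ∑ p ∈ pairs, (onionSize G p.1 p.2 : ℝ) := by
        refine mul_le_mul_of_nonneg_left
          (Finset.sum_le_sum_of_subset_of_nonneg hsub fun _ _ _ => Nat.cast_nonneg _)
          (by positivity)
    _ ≤ 4 * δ * (2 * T : ℝ) := by
        refine mul_le_mul_of_nonneg_left ?_ (by positivity)
        rw [← Nat.cast_sum]
        exact_mod_cast key2
    _ = 8 * δ * T := by ring
end

section
/- Let G be a finite simple undirected graph with T four-cycles, let θ₁, θ₂ > 0 and r ≥ 0 be real numbers. Then the number of four-cycles A of G containing two vertices v and y such that (v,y) is an edge of A, t(v) ≥ θ₁, t(y) ≥ θ₂, and t((v,y)) ≤ r, is at most 16·r·T²/(θ₁·θ₂). -/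
variable {V : Type*}

/-- For reals `θ₁, θ₂ > 0` and `r ≥ 0`, the number of four-cycles `A`
of `G` containing two vertices `v`, `y` such that `(v,y)` is an edge of `A`,
`t(v) ≥ θ₁`, `t(y) ≥ θ₂` and `t((v,y)) ≤ r` is at most `16·r·T²/(θ₁·θ₂)`, where `T`
is the number of four-cycles of `G`. -/
theorem fourCycles_heavy_adjacent_pair_le {V : Type*} [Fintype V] [LinearOrder V]
    (G : SimpleGraph V) (T : ℕ) (hT : T = (fourCycles G).ncard)
    (θ₁ θ₂ r : ℝ) (hθ₁ : 0 < θ₁) (hθ₂ : 0 < θ₂) (hr : 0 ≤ r) :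
    ({A ∈ fourCycles G | ∃ x y : V, x ∈ cycleVerts A ∧ y ∈ cycleVerts A ∧
        s(x, y) ∈ cycleEdges A ∧
        θ₁ ≤ (vertexHeaviness G x : ℝ) ∧ θ₂ ≤ (vertexHeaviness G y : ℝ) ∧
        (edgeHeaviness G s(x, y) : ℝ) ≤ r}.ncard : ℝ)
      ≤ 16 * r * T ^ 2 / (θ₁ * θ₂) := by
  classical
  set C : Finset (V × V × V × V) := Finset.univ.filter (· ∈ fourCycles G) with hC
  have hTC : T = C.card := by
    rw [hT, Set.ncard_eq_toFinset_card _ (Set.toFinite _)]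
    congr 1
    ext A
    simp only [Set.Finite.mem_toFinset, hC, Finset.mem_filter, Finset.mem_univ, true_and]
  set P : (V × V × V × V) → (V × V) → Prop :=
    fun A p => p.1 ∈ cycleVerts A ∧ p.2 ∈ cycleVerts A ∧ s(p.1, p.2) ∈ cycleEdges A ∧
      θ₁ ≤ (vertexHeaviness G p.1 : ℝ) ∧ θ₂ ≤ (vertexHeaviness G p.2 : ℝ) ∧
      (edgeHeaviness G s(p.1, p.2) : ℝ) ≤ r with hP
  set S : Finset (V × V × V × V) :=
    Finset.univ.filter (fun A => A ∈ fourCycles G ∧ ∃ p : V × V, P A p) with hS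
  have hSet : ({A ∈ fourCycles G | ∃ x y : V, x ∈ cycleVerts A ∧ y ∈ cycleVerts A ∧
      s(x, y) ∈ cycleEdges A ∧
      θ₁ ≤ (vertexHeaviness G x : ℝ) ∧ θ₂ ≤ (vertexHeaviness G y : ℝ) ∧
      (edgeHeaviness G s(x, y) : ℝ) ≤ r}.ncard) = S.card := by
    rw [Set.ncard_eq_toFinset_card _ (Set.toFinite _)]
    congr 1
    ext A
    simp [hS, hP, Set.Finite.mem_toFinset, Prod.exists]
  rw [hSet]
  -- the choice function
  set f : (V × V × V × V) → V × V := fun A =>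
    if h : ∃ p : V × V, P A p then h.choose else (A.1, A.1) with hf
  have hfP : ∀ A ∈ S, P A (f A) := by
    intro A hA
    have h : ∃ p : V × V, P A p := (Finset.mem_filter.mp hA).2.2
    simp only [hf, dif_pos h]
    exact h.choose_spec
  set H1 : Finset V := Finset.univ.filter (fun v => θ₁ ≤ (vertexHeaviness G v : ℝ)) with hH1
  set H2 : Finset V := Finset.univ.filter (fun v => θ₂ ≤ (vertexHeaviness G v : ℝ)) with hH2
  set H : Finset (V × V) := H1 ×ˢ H2 with hH
  have hfH : ∀ A ∈ S, f A ∈ H := by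
    intro A hA
    obtain ⟨_, _, _, h1, h2, _⟩ := hfP A hA
    simp only [hH, hH1, hH2, Finset.mem_product, Finset.mem_filter, Finset.mem_univ, true_and]
    exact ⟨h1, h2⟩
  have hsum : S.card = ∑ p ∈ H, (S.filter (fun A => f A = p)).card :=
    Finset.card_eq_sum_card_fiberwise hfH
  have hfiber : ∀ p ∈ H, ((S.filter (fun A => f A = p)).card : ℝ) ≤ r := by
    intro p _
    rcases (S.filter (fun A => f A = p)).eq_empty_or_nonempty with he | ⟨A0, hA0⟩
    · simp [he, hr]
    · have hA0' := Finset.mem_filter.mp hA0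
      have hP0 := hfP A0 hA0'.1
      rw [hA0'.2] at hP0
      have hle : (edgeHeaviness G s(p.1, p.2) : ℝ) ≤ r := hP0.2.2.2.2.2
      have hsub : S.filter (fun A => f A = p) ⊆
          Finset.univ.filter (fun A => A ∈ fourCycles G ∧ s(p.1, p.2) ∈ cycleEdges A) := by
        intro A hA
        have hA' := Finset.mem_filter.mp hA
        have hPA := hfP A hA'.1
        rw [hA'.2] at hPA
        exact Finset.mem_filter.mpr ⟨Finset.mem_univ _,
          (Finset.mem_filter.mp hA'.1).2.1, hPA.2.2.1⟩
      have hcard : edgeHeaviness G s(p.1, p.2) =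
          (Finset.univ.filter (fun A => A ∈ fourCycles G ∧ s(p.1, p.2) ∈ cycleEdges A)).card := by
        rw [edgeHeaviness, Set.ncard_eq_toFinset_card _ (Set.toFinite _)]
        congr 1
        ext A
        simp [Set.Finite.mem_toFinset]
      have h1 : ((S.filter (fun A => f A = p)).card : ℝ) ≤ (edgeHeaviness G s(p.1, p.2) : ℝ) := by
        rw [hcard]
        exact_mod_cast Finset.card_le_card hsub
      linarith
  have hS_le : (S.card : ℝ) ≤ (H.card : ℝ) * r := by
    have : ((∑ p ∈ H, (S.filter (fun A => f A = p)).card : ℕ) : ℝ) ≤ ∑ p ∈ H, r := by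
      push_cast
      exact Finset.sum_le_sum hfiber
    rw [hsum]
    calc ((∑ p ∈ H, (S.filter (fun A => f A = p)).card : ℕ) : ℝ) ≤ ∑ p ∈ H, r := this
      _ = H.card * r := by rw [Finset.sum_const, nsmul_eq_mul]
  -- sum of vertex heaviness
  have hsumv : ∑ v : V, vertexHeaviness G v = 4 * C.card := by
    have hvh : ∀ v, vertexHeaviness G v = (C.filter (fun A => v ∈ cycleVerts A)).card := by
      intro v
      rw [vertexHeaviness, Set.ncard_eq_toFinset_card _ (Set.toFinite _)]
      congr 1
      ext A
      simp [hC, Set.Finite.mem_toFinset, and_comm]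
    calc ∑ v : V, vertexHeaviness G v
        = ∑ v : V, ∑ A ∈ C, if v ∈ cycleVerts A then 1 else 0 := by
          simp only [hvh, Finset.card_filter]
      _ = ∑ A ∈ C, ∑ v : V, if v ∈ cycleVerts A then 1 else 0 := Finset.sum_comm
      _ = ∑ A ∈ C, (Finset.univ.filter (fun v => v ∈ cycleVerts A)).card := by
          simp only [Finset.card_filter]
      _ = ∑ A ∈ C, 4 := by
          apply Finset.sum_congr rfl
          intro A hA
          obtain ⟨hc4, -⟩ := (Finset.mem_filter.mp hA).2
          obtain ⟨-, -, -, -, h1, h2, h3, h4, h5, h6⟩ := hc4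
          have hfe : Finset.univ.filter (fun v => v ∈ cycleVerts A) =
              {A.1, A.2.1, A.2.2.1, A.2.2.2} := by
            ext v
            simp [cycleVerts]
          rw [hfe]
          rw [Finset.card_insert_of_notMem (by simp [h1, h2, h3]),
            Finset.card_insert_of_notMem (by simp [h4, h5]),
            Finset.card_insert_of_notMem (by simp [h6]), Finset.card_singleton]
      _ = 4 * C.card := by rw [Finset.sum_const]; ring
  have hsumvR : ∑ v : V, (vertexHeaviness G v : ℝ) = 4 * T := by
    rw [hTC]
    exact_mod_cast hsumv
  have hHb : ∀ (θ : ℝ) (Hs : Finset V), Hs = Finset.univ.filter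
      (fun v => θ ≤ (vertexHeaviness G v : ℝ)) → θ * Hs.card ≤ 4 * T := by
    intro θ Hs hHs
    have h1 : θ * Hs.card = ∑ _v ∈ Hs, θ := by rw [Finset.sum_const, nsmul_eq_mul]; ring
    have h2 : ∑ v ∈ Hs, θ ≤ ∑ v ∈ Hs, (vertexHeaviness G v : ℝ) := by
      apply Finset.sum_le_sum
      intro v hv
      rw [hHs] at hv
      exact (Finset.mem_filter.mp hv).2
    have h3 : ∑ v ∈ Hs, (vertexHeaviness G v : ℝ) ≤ ∑ v : V, (vertexHeaviness G v : ℝ) :=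
      Finset.sum_le_sum_of_subset_of_nonneg (Finset.subset_univ _)
        (by intro v _ _; positivity)
    linarith [hsumvR]
  have hB1 : θ₁ * H1.card ≤ 4 * T := hHb θ₁ H1 hH1
  have hB2 : θ₂ * H2.card ≤ 4 * T := hHb θ₂ H2 hH2
  have hHcard : (H.card : ℝ) = (H1.card : ℝ) * H2.card := by
    rw [hH, Finset.card_product]
    push_cast
    ring
  rw [le_div_iff₀ (by positivity)]
  have step1 : (S.card : ℝ) * (θ₁ * θ₂) ≤ ((H.card : ℝ) * r) * (θ₁ * θ₂) :=
    mul_le_mul_of_nonneg_right hS_le (by positivity)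
  have step2 : ((H.card : ℝ) * r) * (θ₁ * θ₂) = r * ((θ₁ * H1.card) * (θ₂ * H2.card)) := by
    rw [hHcard]; ring
  have step3 : (θ₁ * H1.card) * (θ₂ * H2.card) ≤ (4 * T) * (4 * T) :=
    mul_le_mul hB1 hB2 (mul_nonneg hθ₂.le (Nat.cast_nonneg _))
      (mul_nonneg (by norm_num) (Nat.cast_nonneg _))
  have step4 : r * ((θ₁ * H1.card) * (θ₂ * H2.card)) ≤ r * ((4 * T) * (4 * T)) :=
    mul_le_mul_of_nonneg_left step3 hr
  have : r * ((4 * (T:ℝ)) * (4 * T)) = 16 * r * T ^ 2 := by ring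
  linarith
end

section
/- Let G be a finite simple undirected graph with T ≥ 1 four-cycles, let δ ∈ (0, 1/2] and let κ > 0 be a real number. Then at most 32δT four-cycles of G contain an edge e with t(e) ≥ κ²/(4δ²) and an edge f vertex-disjoint from e with t(f) ≥ T/(κ²δ²). -/
variable {V : Type*}

lemma verts_of_disjoint_edges [LinearOrder V] {G : SimpleGraph V} {A : V × V × V × V}
    (hA : A ∈ fourCycles G) {e f : Sym2 V}
    (he : e ∈ cycleEdges A) (hf : f ∈ cycleEdges A)
    (hd : ∀ x, x ∈ e → x ∉ f) (x : V) :
    (x ∈ e ∨ x ∈ f) ↔ (x = A.1 ∨ x = A.2.1 ∨ x = A.2.2.1 ∨ x = A.2.2.2) := by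
  obtain ⟨a, b, c, d⟩ := A
  simp only [cycleEdges, Set.mem_insert_iff, Set.mem_singleton_iff] at he hf
  rcases he with rfl | rfl | rfl | rfl <;> rcases hf with rfl | rfl | rfl | rfl <;>
    simp only [Sym2.mem_iff] at hd ⊢ <;>
    first
      | exact absurd (hd _ (Or.inl rfl) (Or.inl rfl)) not_false
      | exact absurd (hd _ (Or.inl rfl) (Or.inr rfl)) not_false
      | exact absurd (hd _ (Or.inr rfl) (Or.inl rfl)) not_false
      | exact absurd (hd _ (Or.inr rfl) (Or.inr rfl)) not_false
      | tauto

lemma sym2_pair_verts (e f : Sym2 V) :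
    ∃ p q r s : V, {x | x ∈ e ∨ x ∈ f} = {p, q, r, s} := by
  induction e using Sym2.ind with | _ p q =>
  induction f using Sym2.ind with | _ r s =>
  exact ⟨p, q, r, s, by ext x; simp [Sym2.mem_iff]; tauto⟩

lemma fiber_ncard_le [LinearOrder V] (G : SimpleGraph V) (e f : Sym2 V) :
    {A | A ∈ fourCycles G ∧ e ∈ cycleEdges A ∧ f ∈ cycleEdges A ∧
      ∀ x, x ∈ e → x ∉ f}.ncard ≤ 4 := by
  obtain ⟨p, q, r, s, hpq⟩ := sym2_pair_verts e f
  have hfin : ({p, q, r, s} : Set V).Finite := Set.toFinite _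
  have h4 : ({p, q, r, s} : Set V).ncard ≤ 4 := by
    refine le_trans (Set.ncard_insert_le _ _) ?_
    refine le_trans (Nat.add_le_add_right (Set.ncard_insert_le _ _) 1) ?_
    refine le_trans (Nat.add_le_add_right (Nat.add_le_add_right (Set.ncard_insert_le _ _) 1) 1) ?_
    simp [Set.ncard_singleton]
  refine le_trans (Set.ncard_le_ncard_of_injOn (fun A => A.2.2.1) ?_ ?_ hfin) h4
  · intro A hA
    rw [← hpq]
    exact (verts_of_disjoint_edges hA.1 hA.2.1 hA.2.2.1 hA.2.2.2 _).mpr (by tauto)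
  · rintro ⟨a, b, c, d⟩ ⟨hA4, he, hf, hdj⟩ ⟨a', b', c', d'⟩ ⟨hA4', he', hf', hdj'⟩ hcc
    simp only at hcc
    subst hcc
    have HV : ∀ x, (x = a ∨ x = b ∨ x = c ∨ x = d) ↔ (x = a' ∨ x = b' ∨ x = c ∨ x = d') := by
      intro x
      exact ((verts_of_disjoint_edges hA4 he hf hdj x).symm.trans
        (verts_of_disjoint_edges hA4' he' hf' hdj' x))
    obtain ⟨⟨_, _, _, _, hab, hac, had, hbc, hbd, hcd⟩, h1, h2, h3, h4⟩ := hA4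
    obtain ⟨⟨_, _, _, _, hab', hac', had', hbc', hbd', hcd'⟩, h1', h2', h3', h4'⟩ := hA4'
    have haa : a = a' := by
      have hle : a' ≤ a := by
        rcases (HV a).1 (Or.inl rfl) with h | h | h | h
        · exact h.ge
        · rw [h]; exact h1'.le
        · rw [h]; exact h2'.le
        · rw [h]; exact h3'.le
      have hle' : a ≤ a' := by
        rcases (HV a').2 (Or.inl rfl) with h | h | h | h
        · exact h.ge
        · rw [h]; exact h1.le
        · rw [h]; exact h2.le
        · rw [h]; exact h3.le
      exact le_antisymm hle' hle
    subst haa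
    have hb : b = b' ∨ b = d' := by
      rcases (HV b).1 (Or.inr (Or.inl rfl)) with h | h | h | h
      · exact absurd h.symm hab
      · exact Or.inl h
      · exact absurd h hbc
      · exact Or.inr h
    have hdd : d = b' ∨ d = d' := by
      rcases (HV d).1 (Or.inr (Or.inr (Or.inr rfl))) with h | h | h | h
      · exact absurd h.symm had
      · exact Or.inl h
      · exact absurd h.symm hcd
      · exact Or.inr h
    rcases hb with rfl | h
    · rcases hdd with h2 | rfl
      · exact absurd h2.symm hbd
      · rfl
    · rcases hdd with h2 | h2
      · exact absurd (lt_trans (h2 ▸ h4) (h ▸ h4')) (lt_irrefl b)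
      · exact absurd (h.trans h2.symm) hbd


/-- If `G` has `T ≥ 1` four-cycles, `δ ∈ (0, 1/2]` and `κ > 0`, then
at most `32δT` four-cycles of `G` contain an edge `e` with `t(e) ≥ κ²/(4δ²)` and an
edge `f` vertex-disjoint from `e` with `t(f) ≥ T/(κ²δ²)`. -/
theorem fourCycles_two_disjoint_heavy_edges_le {V : Type*} [Fintype V]
    [LinearOrder V] (G : SimpleGraph V)
    (T : ℕ) (hT : T = (fourCycles G).ncard) (hT1 : 1 ≤ T)
    (δ : ℝ) (hδ0 : 0 < δ) (hδ1 : δ ≤ 1 / 2) (κ : ℝ) (hκ : 0 < κ) :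
    ({A ∈ fourCycles G | ∃ e ∈ cycleEdges A, ∃ f ∈ cycleEdges A,
        κ ^ 2 / (4 * δ ^ 2) ≤ (edgeHeaviness G e : ℝ) ∧
        (T : ℝ) / (κ ^ 2 * δ ^ 2) ≤ (edgeHeaviness G f : ℝ) ∧
        (∀ x, x ∈ e → x ∉ f)}.ncard : ℝ)
      ≤ 32 * δ * T := by
  classical
  have hfinC : (fourCycles G).Finite := Set.toFinite _
  set Cfin : Finset (V × V × V × V) := hfinC.toFinset with hCfin
  have hCT : Cfin.card = T := by rw [hT, Set.ncard_eq_toFinset_card _ hfinC]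
  set E1 : Finset (Sym2 V) :=
    Finset.univ.filter (fun e => κ ^ 2 / (4 * δ ^ 2) ≤ (edgeHeaviness G e : ℝ)) with hE1
  set E2 : Finset (Sym2 V) :=
    Finset.univ.filter (fun f => (T : ℝ) / (κ ^ 2 * δ ^ 2) ≤ (edgeHeaviness G f : ℝ)) with hE2
  -- heaviness as a Finset card
  have hth : ∀ e : Sym2 V,
      edgeHeaviness G e = (Cfin.filter (fun A => e ∈ cycleEdges A)).card := by
    intro e
    rw [edgeHeaviness, ← Set.ncard_coe_finset]
    congr 1
    ext A
    constructor
    · rintro ⟨h1, h2⟩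
      exact Finset.mem_coe.2 (Finset.mem_filter.2 ⟨(Set.Finite.mem_toFinset hfinC).2 h1, h2⟩)
    · intro h
      have h' := Finset.mem_filter.1 (Finset.mem_coe.1 h)
      exact ⟨(Set.Finite.mem_toFinset hfinC).1 h'.1, h'.2⟩
  -- at most 4 edges of a given finset lie on a fixed cycle
  have hec : ∀ (A : V × V × V × V) (E : Finset (Sym2 V)),
      (E.filter (fun e => e ∈ cycleEdges A)).card ≤ 4 := by
    intro A E
    have hsub : E.filter (fun e => e ∈ cycleEdges A) ⊆
        ({s(A.1, A.2.1), s(A.2.1, A.2.2.1), s(A.2.2.1, A.2.2.2), s(A.2.2.2, A.1)} :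
          Finset (Sym2 V)) := by
      intro x hx
      have hx2 := (Finset.mem_filter.1 hx).2
      simp only [cycleEdges, Set.mem_insert_iff, Set.mem_singleton_iff] at hx2
      simp only [Finset.mem_insert, Finset.mem_singleton]
      tauto
    refine le_trans (Finset.card_le_card hsub) ?_
    refine le_trans (Finset.card_insert_le _ _) ?_
    refine le_trans (Nat.add_le_add_right (Finset.card_insert_le _ _) 1) ?_
    refine le_trans (Nat.add_le_add_right (Nat.add_le_add_right (Finset.card_insert_le _ _) 1) 1) ?_
    simp
  -- sum of heaviness over any edge finset is at most 4T
  have hsum : ∀ E : Finset (Sym2 V), ∑ e ∈ E, edgeHeaviness G e ≤ 4 * T := by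
    intro E
    have hswap : ∑ e ∈ E, edgeHeaviness G e
        = ∑ A ∈ Cfin, (E.filter (fun e => e ∈ cycleEdges A)).card := by
      simp_rw [hth, Finset.card_filter]
      rw [Finset.sum_comm]
    rw [hswap]
    calc ∑ A ∈ Cfin, (E.filter (fun e => e ∈ cycleEdges A)).card
        ≤ ∑ _A ∈ Cfin, 4 := Finset.sum_le_sum (fun A _ => hec A E)
      _ = 4 * T := by rw [Finset.sum_const, smul_eq_mul, hCT, Nat.mul_comm]
  -- threshold bounds
  have hδ2 : (0:ℝ) < δ ^ 2 := by positivity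
  have hκ2 : (0:ℝ) < κ ^ 2 := by positivity
  have hT0 : (0:ℝ) < T := by exact_mod_cast hT1
  have hcard1 : (E1.card : ℝ) * (κ ^ 2 / (4 * δ ^ 2)) ≤ 4 * T := by
    calc (E1.card : ℝ) * (κ ^ 2 / (4 * δ ^ 2))
        = ∑ _e ∈ E1, κ ^ 2 / (4 * δ ^ 2) := by rw [Finset.sum_const, nsmul_eq_mul]
      _ ≤ ∑ e ∈ E1, (edgeHeaviness G e : ℝ) :=
          Finset.sum_le_sum (fun e he => (Finset.mem_filter.1 he).2)
      _ = ((∑ e ∈ E1, edgeHeaviness G e : ℕ) : ℝ) := by push_cast; ring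
      _ ≤ 4 * T := by exact_mod_cast hsum E1
  have hcard2 : (E2.card : ℝ) * ((T : ℝ) / (κ ^ 2 * δ ^ 2)) ≤ 4 * T := by
    calc (E2.card : ℝ) * ((T : ℝ) / (κ ^ 2 * δ ^ 2))
        = ∑ _e ∈ E2, (T : ℝ) / (κ ^ 2 * δ ^ 2) := by rw [Finset.sum_const, nsmul_eq_mul]
      _ ≤ ∑ e ∈ E2, (edgeHeaviness G e : ℝ) :=
          Finset.sum_le_sum (fun e he => (Finset.mem_filter.1 he).2)
      _ = ((∑ e ∈ E2, edgeHeaviness G e : ℕ) : ℝ) := by push_cast; ring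
      _ ≤ 4 * T := by exact_mod_cast hsum E2
  -- the bad set
  set S : Set (V × V × V × V) := {A ∈ fourCycles G | ∃ e ∈ cycleEdges A, ∃ f ∈ cycleEdges A,
        κ ^ 2 / (4 * δ ^ 2) ≤ (edgeHeaviness G e : ℝ) ∧
        (T : ℝ) / (κ ^ 2 * δ ^ 2) ≤ (edgeHeaviness G f : ℝ) ∧
        (∀ x, x ∈ e → x ∉ f)} with hSdef
  have hSfin : S.Finite := Set.toFinite _
  have hSsub : hSfin.toFinset ⊆ (E1 ×ˢ E2).biUnion (fun p => Cfin.filter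
      (fun A => p.1 ∈ cycleEdges A ∧ p.2 ∈ cycleEdges A ∧ ∀ x, x ∈ p.1 → x ∉ p.2)) := by
    intro A hA
    rw [Set.Finite.mem_toFinset] at hA
    obtain ⟨hAC, e, he, f, hf, h1, h2, h3⟩ := hA
    refine Finset.mem_biUnion.2 ⟨(e, f), Finset.mem_product.2 ⟨?_, ?_⟩, ?_⟩
    · exact Finset.mem_filter.2 ⟨Finset.mem_univ _, h1⟩
    · exact Finset.mem_filter.2 ⟨Finset.mem_univ _, h2⟩
    · exact Finset.mem_filter.2 ⟨(Set.Finite.mem_toFinset hfinC).2 hAC, he, hf, h3⟩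
  have hfb : ∀ p : Sym2 V × Sym2 V, (Cfin.filter
      (fun A => p.1 ∈ cycleEdges A ∧ p.2 ∈ cycleEdges A ∧ ∀ x, x ∈ p.1 → x ∉ p.2)).card ≤ 4 := by
    intro p
    rw [← Set.ncard_coe_finset]
    have hcoe : ((Cfin.filter (fun A => p.1 ∈ cycleEdges A ∧ p.2 ∈ cycleEdges A ∧
        ∀ x, x ∈ p.1 → x ∉ p.2) : Finset _) : Set _)
        = {A | A ∈ fourCycles G ∧ p.1 ∈ cycleEdges A ∧ p.2 ∈ cycleEdges A ∧
            ∀ x, x ∈ p.1 → x ∉ p.2} := by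
      ext A
      constructor
      · intro h
        have h' := Finset.mem_filter.1 (Finset.mem_coe.1 h)
        exact ⟨(Set.Finite.mem_toFinset hfinC).1 h'.1, h'.2⟩
      · rintro ⟨h1, h2⟩
        exact Finset.mem_coe.2 (Finset.mem_filter.2 ⟨(Set.Finite.mem_toFinset hfinC).2 h1, h2⟩)
    rw [hcoe]
    exact fiber_ncard_le G p.1 p.2
  have hcount : S.ncard ≤ 4 * (E1.card * E2.card) := by
    rw [Set.ncard_eq_toFinset_card _ hSfin]
    calc hSfin.toFinset.card ≤ _ := Finset.card_le_card hSsub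
      _ ≤ ∑ p ∈ E1 ×ˢ E2, (Cfin.filter (fun A => p.1 ∈ cycleEdges A ∧ p.2 ∈ cycleEdges A ∧
            ∀ x, x ∈ p.1 → x ∉ p.2)).card := Finset.card_biUnion_le
      _ ≤ ∑ _p ∈ E1 ×ˢ E2, 4 := Finset.sum_le_sum (fun p _ => hfb p)
      _ = 4 * (E1.card * E2.card) := by
          rw [Finset.sum_const, smul_eq_mul, Finset.card_product, Nat.mul_comm]
  -- final arithmetic
  have hE1b : (E1.card : ℝ) ≤ 16 * T * δ ^ 2 / κ ^ 2 := by
    rw [le_div_iff₀ hκ2]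
    have h := mul_le_mul_of_nonneg_right hcard1 (le_of_lt (by positivity : (0:ℝ) < 4 * δ ^ 2))
    calc (E1.card : ℝ) * κ ^ 2
        = (E1.card : ℝ) * (κ ^ 2 / (4 * δ ^ 2)) * (4 * δ ^ 2) := by field_simp
      _ ≤ 4 * T * (4 * δ ^ 2) := h
      _ = 16 * T * δ ^ 2 := by ring
  have hE2b : (E2.card : ℝ) ≤ 4 * (κ ^ 2 * δ ^ 2) := by
    have h := mul_le_mul_of_nonneg_right hcard2 (le_of_lt (by positivity : (0:ℝ) < κ ^ 2 * δ ^ 2))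
    have key : (E2.card : ℝ) * ((T : ℝ) / (κ ^ 2 * δ ^ 2)) * (κ ^ 2 * δ ^ 2)
        = (E2.card : ℝ) * T := by field_simp
    have h2 : (E2.card : ℝ) * (T : ℝ) ≤ 4 * (κ ^ 2 * δ ^ 2) * T := by linarith [h, key]
    exact le_of_mul_le_mul_right h2 hT0
  have hδ3 : δ ^ 3 ≤ 1 / 8 := by nlinarith
  calc (S.ncard : ℝ) ≤ 4 * ((E1.card : ℝ) * E2.card) := by exact_mod_cast hcount
    _ ≤ 4 * ((16 * T * δ ^ 2 / κ ^ 2) * (4 * (κ ^ 2 * δ ^ 2))) := by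
        gcongr
    _ = 256 * T * δ ^ 4 := by field_simp; ring
    _ ≤ 32 * δ * T := by
        nlinarith [mul_le_mul_of_nonneg_left hδ3 (show (0:ℝ) ≤ 32 * δ * T by positivity)]
end

section
/- Let G be a finite simple undirected graph with T ≥ 1 four-cycles, let δ ∈ (0, 1/2] and let κ > 0 be a real number. Then at most 32δT four-cycles A of G contain a vertex v with t(v) ≥ κ√T/(2δ^{1.5}) and a vertex y with t(y) ≥ T/(κδ^{1.5}) such that (v,y) is an edge of A with t((v,y)) ≤ √T/δ². -/
variable {V : Type*}

lemma ncard_sep_eq_filter {α : Type*} {s : Set α} (hs : s.Finite) (P : α → Prop)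
    [DecidablePred P] :
    {x ∈ s | P x}.ncard = (hs.toFinset.filter P).card := by
  rw [← Set.ncard_coe_finset]
  congr 1
  ext x
  simp

/-- If `G` has `T ≥ 1` four-cycles, `δ ∈ (0, 1/2]` and `κ > 0`, then
at most `32δT` four-cycles `A` of `G` contain a vertex `v` with `t(v) ≥ κ√T/(2δ^{1.5})`
and a vertex `y` with `t(y) ≥ T/(κδ^{1.5})` such that `(v,y)` is an edge of `A` with
`t((v,y)) ≤ √T/δ²`. -/
theorem fourCycles_heavy_vertex_adjacent_heavy_vertex_le {V : Type*} [Fintype V]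
    [LinearOrder V] (G : SimpleGraph V)
    (T : ℕ) (hT : T = (fourCycles G).ncard) (hT1 : 1 ≤ T)
    (δ : ℝ) (hδ0 : 0 < δ) (hδ1 : δ ≤ 1 / 2) (κ : ℝ) (hκ : 0 < κ) :
    ({A ∈ fourCycles G | ∃ v y : V,
        κ * Real.sqrt T / (2 * δ ^ (1.5:ℝ)) ≤ (vertexHeaviness G v : ℝ) ∧
        (T : ℝ) / (κ * δ ^ (1.5:ℝ)) ≤ (vertexHeaviness G y : ℝ) ∧
        s(v, y) ∈ cycleEdges A ∧
        (edgeHeaviness G s(v, y) : ℝ) ≤ Real.sqrt T / δ ^ 2}.ncard : ℝ)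
      ≤ 32 * δ * T := by
  classical
  have hC : (fourCycles G).Finite := Set.toFinite _
  set C : Finset (V × V × V × V) := hC.toFinset with hCdef
  have hTC : T = C.card := by rw [hT]; exact Set.ncard_eq_toFinset_card _ hC
  set s : ℝ := Real.sqrt T with hs_def
  set p : ℝ := δ ^ (1.5 : ℝ) with hp_def
  have hp : 0 < p := Real.rpow_pos_of_pos hδ0 _
  have hT0 : (1 : ℝ) ≤ (T : ℝ) := by exact_mod_cast hT1
  have hTpos : (0 : ℝ) < T := by linarith
  have hs0 : 0 < s := Real.sqrt_pos.mpr hTpos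
  have hss : s * s = T := Real.mul_self_sqrt (by linarith)
  have hpp : p * p = δ ^ 3 := by
    rw [hp_def, ← Real.rpow_add hδ0, show (1.5 : ℝ) + 1.5 = ((3 : ℕ) : ℝ) by norm_num,
      Real.rpow_natCast]
  set c1 : ℝ := κ * s / (2 * p) with hc1_def
  set c2 : ℝ := (T : ℝ) / (κ * p) with hc2_def
  have hc1 : 0 < c1 := by positivity
  have hc2 : 0 < c2 := by positivity
  -- number of vertices counted with multiplicity
  have hverts : ∀ A ∈ C, (Finset.univ.filter (fun v => v ∈ cycleVerts A)).card = 4 := by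
    intro A hA
    rw [hCdef, Set.Finite.mem_toFinset] at hA
    obtain ⟨⟨_, _, _, _, h12, h13, h14, h23, h24, h34⟩, _⟩ := hA
    have he : (Finset.univ.filter (fun v => v ∈ cycleVerts A)) =
        {A.1, A.2.1, A.2.2.1, A.2.2.2} := by
      ext x; simp [cycleVerts]
    rw [he, Finset.card_insert_of_notMem (by simp [h12, h13, h14]),
      Finset.card_insert_of_notMem (by simp [h23, h24]),
      Finset.card_insert_of_notMem (by simp [h34]), Finset.card_singleton]
  have hv : ∀ v, vertexHeaviness G v = (C.filter (fun A => v ∈ cycleVerts A)).card :=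
    fun v => ncard_sep_eq_filter hC _
  have hsum : ∑ v : V, vertexHeaviness G v = 4 * T := by
    calc ∑ v : V, vertexHeaviness G v
        = ∑ v : V, ∑ A ∈ C, if v ∈ cycleVerts A then 1 else 0 := by
          simp only [hv, Finset.card_filter]
      _ = ∑ A ∈ C, ∑ v : V, if v ∈ cycleVerts A then 1 else 0 := Finset.sum_comm
      _ = ∑ A ∈ C, (Finset.univ.filter (fun v => v ∈ cycleVerts A)).card := by
          simp only [Finset.card_filter]
      _ = ∑ _A ∈ C, 4 := Finset.sum_congr rfl hverts
      _ = 4 * T := by rw [Finset.sum_const, hTC, smul_eq_mul, mul_comm]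
  -- Markov's inequality
  have markov : ∀ c : ℝ, 0 < c →
      (((Finset.univ.filter (fun v => c ≤ (vertexHeaviness G v : ℝ))).card : ℝ) * c
        ≤ 4 * T) := by
    intro c hc
    calc ((Finset.univ.filter (fun v => c ≤ (vertexHeaviness G v : ℝ))).card : ℝ) * c
        = ∑ _v ∈ Finset.univ.filter (fun v => c ≤ (vertexHeaviness G v : ℝ)), c := by
          rw [Finset.sum_const, nsmul_eq_mul]
      _ ≤ ∑ v ∈ Finset.univ.filter (fun v => c ≤ (vertexHeaviness G v : ℝ)),
            (vertexHeaviness G v : ℝ) :=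
          Finset.sum_le_sum fun v hv => (Finset.mem_filter.mp hv).2
      _ ≤ ∑ v : V, (vertexHeaviness G v : ℝ) :=
          Finset.sum_le_sum_of_subset_of_nonneg (Finset.filter_subset _ _)
            (fun _ _ _ => by positivity)
      _ = 4 * T := by rw [← Nat.cast_sum, hsum]; push_cast; ring
  set Hv : Finset V := Finset.univ.filter (fun v => c1 ≤ (vertexHeaviness G v : ℝ)) with hHv
  set Hy : Finset V := Finset.univ.filter (fun v => c2 ≤ (vertexHeaviness G v : ℝ)) with hHy
  set Q : V × V × V × V → Prop := fun A => ∃ v y : V,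
      c1 ≤ (vertexHeaviness G v : ℝ) ∧ c2 ≤ (vertexHeaviness G y : ℝ) ∧
      s(v, y) ∈ cycleEdges A ∧ (edgeHeaviness G s(v, y) : ℝ) ≤ s / δ ^ 2 with hQ
  rw [ncard_sep_eq_filter hC Q]
  set P : Finset (V × V) := (Hv ×ˢ Hy).filter
    (fun q => (edgeHeaviness G s(q.1, q.2) : ℝ) ≤ s / δ ^ 2) with hP
  have hsub : C.filter Q ⊆
      P.biUnion (fun q => C.filter (fun A => s(q.1, q.2) ∈ cycleEdges A)) := by
    intro A hA
    rw [Finset.mem_filter] at hA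
    obtain ⟨hAC, v, y, h1, h2, h3, h4⟩ := hA
    refine Finset.mem_biUnion.mpr ⟨(v, y), ?_, Finset.mem_filter.mpr ⟨hAC, h3⟩⟩
    rw [hP, Finset.mem_filter, Finset.mem_product]
    exact ⟨⟨by simp [hHv, h1], by simp [hHy, h2]⟩, h4⟩
  have hcard : (C.filter Q).card ≤
      ∑ q ∈ P, (C.filter (fun A => s(q.1, q.2) ∈ cycleEdges A)).card :=
    le_trans (Finset.card_le_card hsub) Finset.card_biUnion_le
  have hfiber : ∀ q ∈ P,
      ((C.filter (fun A => s(q.1, q.2) ∈ cycleEdges A)).card : ℝ) ≤ s / δ ^ 2 := by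
    intro q hq
    have := (Finset.mem_filter.mp hq).2
    rwa [edgeHeaviness, ncard_sep_eq_filter hC] at this
  have hPcard : (P.card : ℝ) ≤ (Hv.card : ℝ) * (Hy.card : ℝ) := by
    have h1 : P.card ≤ (Hv ×ˢ Hy).card := Finset.card_filter_le _ _
    have h2 : (Hv ×ˢ Hy).card = Hv.card * Hy.card := Finset.card_product _ _
    exact_mod_cast h1.trans_eq h2
  have hchain : ((C.filter Q).card : ℝ) ≤ (Hv.card : ℝ) * (Hy.card : ℝ) * (s / δ ^ 2) := by
    calc ((C.filter Q).card : ℝ)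
        ≤ ∑ q ∈ P, ((C.filter (fun A => s(q.1, q.2) ∈ cycleEdges A)).card : ℝ) := by
          exact_mod_cast hcard
      _ ≤ ∑ _q ∈ P, (s / δ ^ 2) := Finset.sum_le_sum hfiber
      _ = (P.card : ℝ) * (s / δ ^ 2) := by rw [Finset.sum_const, nsmul_eq_mul]
      _ ≤ (Hv.card : ℝ) * (Hy.card : ℝ) * (s / δ ^ 2) := by
          apply mul_le_mul_of_nonneg_right hPcard; positivity
  set a : ℝ := (Hv.card : ℝ) with ha
  set b : ℝ := (Hy.card : ℝ) with hb
  have ha0 : 0 ≤ a := by positivity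
  have hb0 : 0 ≤ b := by positivity
  have hM1 : a * c1 ≤ 4 * T := markov c1 hc1
  have hM2 : b * c2 ≤ 4 * T := markov c2 hc2
  have h1' : a * (κ * s) ≤ 4 * T * (2 * p) := by
    rw [hc1_def, ← mul_div_assoc] at hM1
    exact (div_le_iff₀ (by positivity)).mp hM1
  have h2' : b * (T : ℝ) ≤ 4 * T * (κ * p) := by
    rw [hc2_def, ← mul_div_assoc] at hM2
    exact (div_le_iff₀ (by positivity)).mp hM2
  have key : (a * (κ * s)) * (b * (T : ℝ)) ≤ (4 * T * (2 * p)) * (4 * T * (κ * p)) :=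
    mul_le_mul h1' h2' (by positivity) (by positivity)
  have hRHS : (4 * (T:ℝ) * (2 * p)) * (4 * T * (κ * p)) = 32 * T * δ ^ 3 * (κ * T) := by
    rw [← hpp]; ring
  have hκT : (0 : ℝ) < κ * T := by positivity
  have key' : a * b * s * (κ * T) ≤ 32 * (T : ℝ) * δ ^ 3 * (κ * T) := by
    calc a * b * s * (κ * T) = (a * (κ * s)) * (b * (T : ℝ)) := by ring
      _ ≤ _ := key
      _ = _ := hRHS
  have habs : a * b * s ≤ 32 * (T : ℝ) * δ ^ 3 := le_of_mul_le_mul_right key' hκT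
  have hfin : a * b * (s / δ ^ 2) ≤ 32 * δ * T := by
    rw [mul_div_assoc' (a*b) s (δ^2), div_le_iff₀ (by positivity)]
    calc a * b * s ≤ 32 * (T : ℝ) * δ ^ 3 := habs
      _ = 32 * δ * ↑T * δ ^ 2 := by ring
  exact hchain.trans hfin
end

section
/- Let G be a finite simple undirected graph with T ≥ 1 four-cycles, let δ ∈ (0, 1/2] and let κ > 0 be a real number. Then at most 32δT four-cycles of G contain a vertex v with t(v) ≥ κ√T/(2δ^{1.5}) and a wedge ∧, vertex-disjoint from v, with t(∧) ≥ √T/(κδ). -/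
variable {V : Type*}

/-- Reconstruct a four-cycle from a vertex and the opposite wedge. -/
def recon [LinearOrder V] (v : V) (w : V × Sym2 V) : V × V × V × V :=
  let u := w.1
  let x := Sym2.lift ⟨min, min_comm⟩ w.2
  let y := Sym2.lift ⟨max, max_comm⟩ w.2
  if min v u < x then (min v u, x, max v u, y) else (x, min v u, y, max v u)

lemma recon_eq [LinearOrder V] {G : SimpleGraph V} {A : V × V × V × V}
    (hA : A ∈ fourCycles G) {v : V} {w : V × Sym2 V}
    (hv : v ∈ cycleVerts A) (hw : w ∈ cycleWedges A) (hvw : v ∉ wedgeVerts w) :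
    recon v w = A := by
  obtain ⟨a, b, c, d⟩ := A
  obtain ⟨⟨hab, hbc, hcd, hda, h1, h2, h3, h4, h5, h6⟩, o1, o2, o3, o4⟩ := hA
  simp only [cycleVerts, Set.mem_insert_iff, Set.mem_singleton_iff] at hv
  simp only [cycleWedges, Set.mem_insert_iff, Set.mem_singleton_iff] at hw
  rcases hw with h | h | h | h <;> subst h <;>
    simp only [wedgeVerts, Set.mem_insert_iff, Set.mem_setOf_eq, Sym2.mem_iff, not_or] at hvw
  · obtain ⟨hb', ha', hc'⟩ := hvw
    have hvd : v = d := by rcases hv with h|h|h|h <;> simp_all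
    subst hvd
    simp only [recon, Sym2.lift_mk]
    simp only [min_eq_left o2.le, max_eq_right o2.le, min_eq_right o4.le, max_eq_left o4.le,
      if_neg (asymm o1)]
  · obtain ⟨hc', hb', hd'⟩ := hvw
    have hva : v = a := by rcases hv with h|h|h|h <;> simp_all
    subst hva
    simp only [recon, Sym2.lift_mk]
    simp only [min_eq_left o4.le, max_eq_right o4.le, min_eq_left o2.le, max_eq_right o2.le,
      if_pos o1]
  · obtain ⟨hd', hc', ha'⟩ := hvw
    have hvb : v = b := by rcases hv with h|h|h|h <;> simp_all
    subst hvb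
    simp only [recon, Sym2.lift_mk]
    simp only [min_comm c a, min_eq_left o2.le, max_comm c a, max_eq_right o2.le,
      min_eq_left o4.le, max_eq_right o4.le, if_neg (asymm o1)]
  · obtain ⟨ha', hd', hb'⟩ := hvw
    have hvc : v = c := by rcases hv with h|h|h|h <;> simp_all
    subst hvc
    simp only [recon, Sym2.lift_mk]
    simp only [min_comm d b, min_eq_left o4.le, max_comm d b, max_eq_right o4.le,
      min_eq_right o2.le, max_eq_left o2.le, if_pos o1]

lemma cardVerts [Fintype V] [LinearOrder V] {G : SimpleGraph V} {A : V × V × V × V}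
    (hA : A ∈ fourCycles G) {inst : DecidablePred (fun v => v ∈ cycleVerts A)} :
    (@Finset.filter V (fun v => v ∈ cycleVerts A) inst Finset.univ).card = 4 := by
  classical
  obtain ⟨a, b, c, d⟩ := A
  obtain ⟨⟨-, -, -, -, h1, h2, h3, h4, h5, h6⟩, -, -, -, -⟩ := hA
  have : (@Finset.filter V (fun v => v ∈ cycleVerts (a,b,c,d)) inst Finset.univ) = {a, b, c, d} := by
    ext x; simp [cycleVerts]
  rw [this]
  rw [Finset.card_insert_of_notMem (by simp [h1, h2, h3]),
    Finset.card_insert_of_notMem (by simp [h4, h5]),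
    Finset.card_insert_of_notMem (by simp [h6]), Finset.card_singleton]

lemma cardWedges [Fintype V] [LinearOrder V] {G : SimpleGraph V} {A : V × V × V × V}
    (hA : A ∈ fourCycles G) {inst : DecidablePred (fun w => w ∈ cycleWedges A)} :
    (@Finset.filter _ (fun w => w ∈ cycleWedges A) inst Finset.univ).card = 4 := by
  classical
  obtain ⟨a, b, c, d⟩ := A
  obtain ⟨⟨-, -, -, -, h1, h2, h3, h4, h5, h6⟩, -, -, -, -⟩ := hA
  have : (@Finset.filter _ (fun w => w ∈ cycleWedges (a,b,c,d)) inst Finset.univ) =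
      {(b, s(a,c)), (c, s(b,d)), (d, s(c,a)), (a, s(d,b))} := by
    ext x; simp [cycleWedges]
  rw [this]
  rw [Finset.card_insert_of_notMem (by simp [Prod.ext_iff, h4, h5, h1]; tauto),
    Finset.card_insert_of_notMem (by simp [Prod.ext_iff, h6, h2]; tauto),
    Finset.card_insert_of_notMem (by simp [Prod.ext_iff, h3]; tauto), Finset.card_singleton]

/-- If `G` has `T ≥ 1` four-cycles, `δ ∈ (0, 1/2]` and `κ > 0`, then
at most `32δT` four-cycles of `G` contain a vertex `v` with `t(v) ≥ κ√T/(2δ^{1.5})`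
and a wedge `∧`, vertex-disjoint from `v`, with `t(∧) ≥ √T/(κδ)`. -/
theorem fourCycles_heavy_vertex_disjoint_heavy_wedge_le {V : Type*} [Fintype V]
    [LinearOrder V] (G : SimpleGraph V)
    (T : ℕ) (hT : T = (fourCycles G).ncard) (hT1 : 1 ≤ T)
    (δ : ℝ) (hδ0 : 0 < δ) (hδ1 : δ ≤ 1 / 2) (κ : ℝ) (hκ : 0 < κ) :
    ({A ∈ fourCycles G | ∃ v ∈ cycleVerts A, ∃ w ∈ cycleWedges A,
        κ * Real.sqrt T / (2 * δ ^ (1.5:ℝ)) ≤ (vertexHeaviness G v : ℝ) ∧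
        Real.sqrt T / (κ * δ) ≤ (wedgeHeaviness G w : ℝ) ∧
        v ∉ wedgeVerts w}.ncard : ℝ)
      ≤ 32 * δ * T := by
  classical
  set H : ℝ := κ * Real.sqrt T / (2 * δ ^ (1.5:ℝ)) with hHdef
  set W : ℝ := Real.sqrt T / (κ * δ) with hWdef
  set C : Finset (V × V × V × V) := (fourCycles G).toFinset with hCdef
  have hCmem : ∀ A, A ∈ C ↔ A ∈ fourCycles G := fun A => Set.mem_toFinset
  have hTC : T = C.card := by rw [hT]; exact Set.ncard_eq_toFinset_card' _
  -- heaviness as filter cards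
  have hvH : ∀ v : V, vertexHeaviness G v = (C.filter (fun A => v ∈ cycleVerts A)).card := by
    intro v
    rw [vertexHeaviness,
      show {A ∈ fourCycles G | v ∈ cycleVerts A} = ↑(C.filter (fun A => v ∈ cycleVerts A)) by
        ext A; simp [hCmem, Set.mem_setOf_eq]]
    exact Set.ncard_coe_finset _
  have hwH : ∀ w : V × Sym2 V,
      wedgeHeaviness G w = (C.filter (fun A => w ∈ cycleWedges A)).card := by
    intro w
    rw [wedgeHeaviness,
      show {A ∈ fourCycles G | w ∈ cycleWedges A} = ↑(C.filter (fun A => w ∈ cycleWedges A)) by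
        ext A; simp [hCmem, Set.mem_setOf_eq]]
    exact Set.ncard_coe_finset _
  -- sum identities
  have hsumV : ∑ v : V, vertexHeaviness G v = 4 * C.card := by
    simp_rw [hvH, Finset.card_filter]
    rw [Finset.sum_comm]
    calc ∑ A ∈ C, ∑ v : V, ite (v ∈ cycleVerts A) 1 0
        = ∑ A ∈ C, 4 := Finset.sum_congr rfl (fun A hA => by
          rw [← Finset.card_filter]; exact cardVerts ((hCmem A).1 hA))
      _ = 4 * C.card := by rw [Finset.sum_const, smul_eq_mul, mul_comm]
  have hsumW : ∑ w : V × Sym2 V, wedgeHeaviness G w = 4 * C.card := by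
    simp_rw [hwH, Finset.card_filter]
    rw [Finset.sum_comm]
    calc ∑ A ∈ C, ∑ w : V × Sym2 V, ite (w ∈ cycleWedges A) 1 0
        = ∑ A ∈ C, 4 := Finset.sum_congr rfl (fun A hA => by
          rw [← Finset.card_filter]; exact cardWedges ((hCmem A).1 hA))
      _ = 4 * C.card := by rw [Finset.sum_const, smul_eq_mul, mul_comm]
  -- heavy sets
  set hVf : Finset V := Finset.univ.filter (fun v => H ≤ (vertexHeaviness G v : ℝ)) with hVfdef
  set hWf : Finset (V × Sym2 V) :=
    Finset.univ.filter (fun w => W ≤ (wedgeHeaviness G w : ℝ)) with hWfdef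
  have hTpos : (0:ℝ) < T := by exact_mod_cast hT1
  have hsT : 0 < Real.sqrt T := Real.sqrt_pos.2 hTpos
  have hδ15pos : (0:ℝ) < δ ^ (1.5:ℝ) := Real.rpow_pos_of_pos hδ0 _
  have hHpos : 0 < H := div_pos (mul_pos hκ hsT) (by positivity)
  have hWpos : 0 < W := div_pos hsT (mul_pos hκ hδ0)
  have hVcard : (hVf.card : ℝ) * H ≤ 4 * T := by
    have h1 : (hVf.card : ℝ) * H ≤ ∑ v ∈ hVf, (vertexHeaviness G v : ℝ) := by
      have := Finset.card_nsmul_le_sum hVf (fun v => (vertexHeaviness G v : ℝ)) H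
        (fun v hv => (Finset.mem_filter.1 hv).2)
      simpa [nsmul_eq_mul] using this
    have h2 : ∑ v ∈ hVf, (vertexHeaviness G v : ℝ) ≤ ∑ v : V, (vertexHeaviness G v : ℝ) :=
      Finset.sum_le_sum_of_subset_of_nonneg (Finset.subset_univ _)
        (fun _ _ _ => by positivity)
    have h3 : ∑ v : V, (vertexHeaviness G v : ℝ) = 4 * T := by
      rw [← Nat.cast_sum, hsumV, ← hTC]; push_cast; ring
    linarith
  have hWcard : (hWf.card : ℝ) * W ≤ 4 * T := by
    have h1 : (hWf.card : ℝ) * W ≤ ∑ w ∈ hWf, (wedgeHeaviness G w : ℝ) := by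
      have := Finset.card_nsmul_le_sum hWf (fun w => (wedgeHeaviness G w : ℝ)) W
        (fun w hw => (Finset.mem_filter.1 hw).2)
      simpa [nsmul_eq_mul] using this
    have h2 : ∑ w ∈ hWf, (wedgeHeaviness G w : ℝ) ≤ ∑ w : V × Sym2 V, (wedgeHeaviness G w : ℝ) :=
      Finset.sum_le_sum_of_subset_of_nonneg (Finset.subset_univ _)
        (fun _ _ _ => by positivity)
    have h3 : ∑ w : V × Sym2 V, (wedgeHeaviness G w : ℝ) = 4 * T := by
      rw [← Nat.cast_sum, hsumW, ← hTC]; push_cast; ring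
    linarith
  -- the injection
  set S : Set (V × V × V × V) := {A ∈ fourCycles G | ∃ v ∈ cycleVerts A, ∃ w ∈ cycleWedges A,
      H ≤ (vertexHeaviness G v : ℝ) ∧ W ≤ (wedgeHeaviness G w : ℝ) ∧
      v ∉ wedgeVerts w} with hSdef
  set F : (V × V × V × V) → V × (V × Sym2 V) := fun A =>
    if h : ∃ p : V × (V × Sym2 V), p.1 ∈ cycleVerts A ∧ p.2 ∈ cycleWedges A ∧
        H ≤ (vertexHeaviness G p.1 : ℝ) ∧ W ≤ (wedgeHeaviness G p.2 : ℝ) ∧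
        p.1 ∉ wedgeVerts p.2
    then h.choose else (A.1, A.1, s(A.1, A.1)) with hFdef
  have hmaps : ∀ A ∈ S, (F A) ∈ (↑(hVf ×ˢ hWf) : Set (V × (V × Sym2 V))) ∧
      recon (F A).1 (F A).2 = A := by
    intro A hA
    obtain ⟨hAc, v, hv, w, hw, hHv, hWw, hdisj⟩ := hA
    have hex : ∃ p : V × (V × Sym2 V), p.1 ∈ cycleVerts A ∧ p.2 ∈ cycleWedges A ∧
        H ≤ (vertexHeaviness G p.1 : ℝ) ∧ W ≤ (wedgeHeaviness G p.2 : ℝ) ∧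
        p.1 ∉ wedgeVerts p.2 := ⟨(v, w), hv, hw, hHv, hWw, hdisj⟩
    have hFA : F A = hex.choose := by rw [hFdef]; exact dif_pos hex
    obtain ⟨hp1, hp2, hp3, hp4, hp5⟩ := hex.choose_spec
    rw [hFA]
    refine ⟨?_, recon_eq hAc hp1 hp2 hp5⟩
    simp only [Finset.coe_product, Set.mem_prod, Finset.mem_coe, hVfdef, hWfdef,
      Finset.mem_filter, Finset.mem_univ, true_and]
    exact ⟨hp3, hp4⟩
  have hcount : S.ncard ≤ hVf.card * hWf.card := by
    have := Set.ncard_le_ncard_of_injOn F (fun A hA => (hmaps A hA).1)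
      (fun A hA B hB hFE => by rw [← (hmaps A hA).2, ← (hmaps B hB).2, hFE])
      (Set.toFinite _)
    have h2 : ((↑(hVf ×ˢ hWf) : Set (V × (V × Sym2 V)))).ncard = hVf.card * hWf.card := by
      rw [Set.ncard_coe_finset, Finset.card_product]
    rwa [h2] at this
  -- arithmetic
  have hcast : (S.ncard : ℝ) ≤ (hVf.card : ℝ) * (hWf.card : ℝ) := by exact_mod_cast hcount
  have hs2 : Real.sqrt T * Real.sqrt T = T := Real.mul_self_sqrt hTpos.le
  have hHW : H * W * (2 * (δ ^ (1.5:ℝ) * δ)) = T := by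
    rw [hHdef, hWdef]
    field_simp
    linear_combination hs2
  have hδ15le : δ ^ (1.5:ℝ) ≤ 1 :=
    Real.rpow_le_one hδ0.le (by linarith) (by norm_num)
  have h16 : (hVf.card : ℝ) * (hWf.card : ℝ) * (H * W) ≤ 16 * (T:ℝ)^2 := by
    nlinarith [mul_le_mul hVcard hWcard (by positivity : (0:ℝ) ≤ (hWf.card : ℝ) * W)
      (by positivity : (0:ℝ) ≤ 4 * (T:ℝ))]
  have h32 : (hVf.card : ℝ) * (hWf.card : ℝ) ≤ 32 * (T:ℝ) * (δ ^ (1.5:ℝ) * δ) := by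
    have hmul := mul_le_mul_of_nonneg_right h16
      (le_of_lt (by positivity : (0:ℝ) < 2 * (δ ^ (1.5:ℝ) * δ)))
    have key : (hVf.card : ℝ) * (hWf.card : ℝ) * T ≤ 32 * (T:ℝ)^2 * (δ ^ (1.5:ℝ) * δ) := by
      calc (hVf.card : ℝ) * (hWf.card : ℝ) * T
          = (hVf.card : ℝ) * (hWf.card : ℝ) * (H * W) * (2 * (δ ^ (1.5:ℝ) * δ)) := by
            rw [← hHW]; ring
        _ ≤ 16 * (T:ℝ)^2 * (2 * (δ ^ (1.5:ℝ) * δ)) := hmul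
        _ = 32 * (T:ℝ)^2 * (δ ^ (1.5:ℝ) * δ) := by ring
    have := le_of_mul_le_mul_right (by
      calc (hVf.card : ℝ) * (hWf.card : ℝ) * T ≤ 32 * (T:ℝ)^2 * (δ ^ (1.5:ℝ) * δ) := key
        _ = 32 * (T:ℝ) * (δ ^ (1.5:ℝ) * δ) * T := by ring) hTpos
    exact this
  have hfin : 32 * (T:ℝ) * (δ ^ (1.5:ℝ) * δ) ≤ 32 * δ * T := by
    nlinarith [hδ15le, hTpos, hδ0, hδ15pos]
  calc (S.ncard : ℝ) ≤ (hVf.card : ℝ) * (hWf.card : ℝ) := hcast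
    _ ≤ 32 * (T:ℝ) * (δ ^ (1.5:ℝ) * δ) := h32
    _ ≤ 32 * δ * T := hfin
end
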